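/- arXiv:2503.18453 — 7 statements merged into one kernel-verified Lean document; each statement's English description precedes it below -/
import Mathlib

section
/- For every integer N ≥ 1, every integer k ≥ 1, and all index tuples i = (i_1,…,i_k), j = (j_1,…,j_k) with entries in {1,…,N}, the average (1/N!)·Σ_{g∈S_N} ∏_{l=1}^{k} g_{i_l j_l} equals 1/(N)_{#Π_i} if the kernel partitions satisfy Π_i = Π_j, and equals 0 otherwise. -/
open Finset

noncomputable section

namespace WgPerm

/-- Number of blocks of the partition of `α` corresponding to the setoid `s`. -/
def numBlocks {α : Type*} (s : Setoid α) : ℕ := Nat.card (Quotient s)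

/-- Number of blocks of `s` contained in the block `B` of `t` (meaningful when `s ≤ t`). -/
def lam {α : Type*} (s t : Setoid α) (B : Quotient t) : ℕ :=
  Nat.card {c : Quotient s // Quotient.mk t (Quotient.out c) = B}

/-- Möbius function of the partition lattice:
`μ(s,t) = ∏_B (−1)^{λ_B−1} (λ_B−1)!` over the blocks `B` of `t`. -/
def mobius {α : Type*} (s t : Setoid α) : ℤ :=
  ∏ᶠ B : Quotient t, (-1 : ℤ) ^ (lam s t B - 1) * (Nat.factorial (lam s t B - 1) : ℤ)

/-- Kernel partition `Π_i` of a tuple `i`. -/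
def kerP {k N : ℕ} (i : Fin k → Fin N) : Setoid (Fin k) := Setoid.ker i

/-- `(i,j)` entry of the permutation matrix of `g`. -/
def permEntry {N : ℕ} (g : Equiv.Perm (Fin N)) (i j : Fin N) : ℝ :=
  if g i = j then 1 else 0

/-- The Weingarten function for the symmetric group `S_N`. -/
def Wg (k N : ℕ) (σ τ : Setoid (Fin k)) : ℝ :=
  ∑ᶠ π ∈ {π : Setoid (Fin k) | π ≤ σ ⊓ τ},
    ((mobius π σ * mobius π τ : ℤ) : ℝ) / (Nat.descFactorial N (numBlocks π) : ℝ)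

/-- `|D(π)|`: the number of singleton blocks of `π`. -/
def numSingletons {k : ℕ} (π : Setoid (Fin k)) : ℕ :=
  Nat.card {j : Fin k | ∀ m, π.r j m → m = j}

/-- The centered Weingarten function for the symmetric group `S_N`. -/
def cWg (k N : ℕ) (σ τ : Setoid (Fin k)) : ℝ :=
  ∑ i ∈ Finset.range (numSingletons (σ ⊔ τ) + 1),
    ((numSingletons (σ ⊔ τ)).choose i : ℝ) * (-1 : ℝ) ^ i *
      ∑ᶠ π ∈ {π : Setoid (Fin k) | π ≤ σ ⊓ τ},
        ((mobius π σ * mobius π τ : ℤ) : ℝ) * ((N : ℝ) ^ i)⁻¹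
          / (Nat.descFactorial N (numBlocks π - i) : ℝ)

/-- `a_k(N) = Σ_{l=0}^{k} binom(k,l)·(−N)^{−(k−l)}/(N)_l`. -/
def aSeq (k N : ℕ) : ℝ :=
  ∑ l ∈ Finset.range (k + 1),
    (k.choose l : ℝ) * ((-(N : ℝ)) ^ (k - l))⁻¹ / (Nat.descFactorial N l : ℝ)


open Classical in
/-- moments of random permutation matrix entries. -/
theorem stmt0 (N k : ℕ) (hN : 1 ≤ N) (hk : 1 ≤ k) (i j : Fin k → Fin N) :
    (1 / (Nat.factorial N : ℝ)) *
        ∑ g : Equiv.Perm (Fin N), ∏ l : Fin k, permEntry g (i l) (j l) =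
      if kerP i = kerP j then
        ((Nat.descFactorial N (numBlocks (kerP i)) : ℝ))⁻¹
      else 0 := by
  classical
  have hprod : ∀ g : Equiv.Perm (Fin N),
      (∏ l : Fin k, permEntry g (i l) (j l)) =
        if ∀ l, g (i l) = j l then (1:ℝ) else 0 := by
    intro g
    by_cases hc : ∀ l, g (i l) = j l
    · rw [if_pos hc]
      exact Finset.prod_eq_one fun l _ => by simp [permEntry, hc l]
    · rw [if_neg hc]
      obtain ⟨l0, hl0⟩ := not_forall.mp hc
      exact Finset.prod_eq_zero (mem_univ l0) (by simp [permEntry, hl0])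
  have hsum : (∑ g : Equiv.Perm (Fin N), ∏ l : Fin k, permEntry g (i l) (j l))
      = ((univ.filter fun g : Equiv.Perm (Fin N) => ∀ l, g (i l) = j l).card : ℝ) := by
    rw [Finset.sum_congr rfl fun g _ => hprod g]
    rw [Finset.sum_boole]
  rw [hsum]
  by_cases h : kerP i = kerP j
  · rw [if_pos h]
    have hij : ∀ l m, i l = i m ↔ j l = j m := by
      intro l m
      have h2 : Setoid.ker i = Setoid.ker j := h
      constructor
      · intro e
        exact Setoid.ker_def.mp (h2 ▸ Setoid.ker_def.mpr e)
      · intro e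
        exact Setoid.ker_def.mp (h2.symm ▸ Setoid.ker_def.mpr e)
    set r := numBlocks (kerP i) with hrdef
    have hr : r = Fintype.card (Set.range i) := by
      rw [hrdef]
      unfold numBlocks kerP
      rw [Nat.card_congr (Setoid.quotientKerEquivRange i), Nat.card_eq_fintype_card]
    have hrN : r ≤ N := by
      rw [hr]
      calc Fintype.card (Set.range i) ≤ Fintype.card (Fin N) :=
        Fintype.card_le_of_injective _ Subtype.val_injective
      _ = N := Fintype.card_fin N
    -- bijection between ranges
    have Fbij : Function.Bijective (fun x : Set.range i =>
        (⟨j (Classical.choose x.2), Set.mem_range_self _⟩ : Set.range j)) := by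
      constructor
      · rintro ⟨x, hx⟩ ⟨y, hy⟩ hxy
        have hx' : i (Classical.choose hx) = x := Classical.choose_spec hx
        have hy' : i (Classical.choose hy) = y := Classical.choose_spec hy
        have h1 : j (Classical.choose hx) = j (Classical.choose hy) := by
          simpa using hxy
        have h2 := (hij _ _).mpr h1
        have : x = y := by rw [← hx', ← hy', h2]
        exact Subtype.ext this
      · rintro ⟨y, m, hm⟩
        refine ⟨⟨i m, Set.mem_range_self m⟩, ?_⟩
        have hc : i (Classical.choose (Set.mem_range_self (f := i) m)) = i m :=
          Classical.choose_spec (Set.mem_range_self m)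
        exact Subtype.ext (by simpa [hm] using (hij _ _).mp hc)
    set F := Equiv.ofBijective _ Fbij with hFdef
    have hFapp : ∀ (l : Fin k), (F ⟨i l, Set.mem_range_self l⟩ : Fin N) = j l := by
      intro l
      have hc : i (Classical.choose (Set.mem_range_self (f := i) l)) = i l :=
        Classical.choose_spec (Set.mem_range_self l)
      simpa [hFdef, Equiv.ofBijective] using (hij _ _).mp hc
    have hcards : Fintype.card (Set.range i) = Fintype.card (Set.range j) :=
      Fintype.card_congr F
    have hcardc : Fintype.card ((Set.range i)ᶜ : Set (Fin N))
        = Fintype.card ((Set.range j)ᶜ : Set (Fin N)) := by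
      rw [Fintype.card_compl_set, Fintype.card_compl_set, hcards]
    -- the restriction map
    have hmapsto : ∀ (g : Equiv.Perm (Fin N)), (∀ l, g (i l) = j l) →
        ∀ x : Fin N, x ∉ Set.range i → g x ∉ Set.range j := by
      intro g hg x hx hgx
      obtain ⟨l, hl⟩ := hgx
      exact hx ⟨l, g.injective (by rw [hg l, hl])⟩
    have key : Fintype.card {g : Equiv.Perm (Fin N) // ∀ l, g (i l) = j l}
        = Fintype.card (((Set.range i)ᶜ : Set (Fin N)) ≃ ((Set.range j)ᶜ : Set (Fin N))) := by
      apply Fintype.card_congr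
      refine Equiv.ofBijective (fun gp =>
        Equiv.ofBijective (fun x : ((Set.range i)ᶜ : Set (Fin N)) =>
          (⟨gp.1 x, hmapsto gp.1 gp.2 x x.2⟩ : ((Set.range j)ᶜ : Set (Fin N))))
          ((Fintype.bijective_iff_injective_and_card _).mpr
            ⟨fun x y hxy => Subtype.ext (gp.1.injective (by simpa using hxy)), hcardc⟩))
        ⟨?_, ?_⟩
      · rintro ⟨g, hg⟩ ⟨g', hg'⟩ he
        refine Subtype.ext (Equiv.ext fun x => ?_)
        by_cases hx : x ∈ Set.range i
        · obtain ⟨l, rfl⟩ := hx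
          rw [hg l, hg' l]
        · have h3 := congrArg (fun e : ((Set.range i)ᶜ : Set (Fin N)) ≃ ((Set.range j)ᶜ : Set (Fin N)) => (e ⟨x, hx⟩ : Fin N)) he
          simpa using h3
      · intro e
        refine ⟨⟨(Equiv.Set.sumCompl (Set.range i)).symm.trans
          ((F.sumCongr e).trans (Equiv.Set.sumCompl (Set.range j))), fun l => ?_⟩, ?_⟩
        · rw [Equiv.trans_apply, Equiv.trans_apply,
            Equiv.Set.sumCompl_symm_apply_of_mem (Set.mem_range_self l)]
          simpa using hFapp l
        · apply Equiv.ext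
          rintro ⟨x, hx⟩
          apply Subtype.ext
          simp [Equiv.Set.sumCompl_symm_apply_of_notMem hx]
    have hcompl : Fintype.card ((Set.range i)ᶜ : Set (Fin N)) = N - r := by
      rw [Fintype.card_compl_set, hr, Fintype.card_fin]
    have hcard2 : Fintype.card (((Set.range i)ᶜ : Set (Fin N)) ≃ ((Set.range j)ᶜ : Set (Fin N)))
        = Nat.factorial (N - r) := by
      rw [Fintype.card_equiv (Fintype.equivOfCardEq hcardc), hcompl]
    have hfilter : (univ.filter fun g : Equiv.Perm (Fin N) => ∀ l, g (i l) = j l).card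
        = Nat.factorial (N - r) := by
      rw [← Fintype.card_subtype, key, hcard2]
    rw [hfilter]
    have hd : ((N - r).factorial : ℝ) * (Nat.descFactorial N r : ℝ) = (N.factorial : ℝ) := by
      rw [← Nat.cast_mul, Nat.factorial_mul_descFactorial hrN]
    have hdpos : (0:ℝ) < (Nat.descFactorial N r : ℝ) := by
      have : N.descFactorial r ≠ 0 := by
        intro h0
        exact absurd (Nat.descFactorial_eq_zero_iff_lt.mp h0) (not_lt.mpr hrN)
      exact_mod_cast Nat.pos_of_ne_zero this
    field_simp
    linarith [hd]
  · rw [if_neg h]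
    have : (univ.filter fun g : Equiv.Perm (Fin N) => ∀ l, g (i l) = j l) = ∅ := by
      rw [Finset.filter_eq_empty_iff]
      intro g _ hg
      apply h
      apply Setoid.ext
      intro l m
      unfold kerP
      rw [Setoid.ker_def, Setoid.ker_def]
      constructor
      · intro e
        rw [← hg l, ← hg m, e]
      · intro e
        exact g.injective (by rw [hg l, hg m, e])
    rw [this]
    simp


end WgPerm

end
end

section
/- For every integer k ≥ 1, every integer N ≥ k, and all index tuples i = (i_1,…,i_k), j = (j_1,…,j_k) with entries in {1,…,N}, one has (1/N!)·Σ_{g∈S_N} ∏_{l=1}^{k} g_{i_l j_l} = Σ_{σ,τ ∈ P(k), σ ≤ Π_i, τ ≤ Π_j} Wg_k(σ,τ,N). -/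
open Finset

noncomputable section

namespace WgPerm

open scoped Classical
set_option linter.unusedSectionVars false
set_option linter.unusedVariables false
set_option maxHeartbeats 1000000

def mobf (n : ℕ) : ℤ := (-1) ^ (n - 1) * (Nat.factorial (n - 1) : ℤ)

lemma mobf_one : mobf 1 = 1 := by simp [mobf]

lemma mobf_step {t : ℕ} (ht : 2 ≤ t) : mobf t + (t - 1 : ℤ) * mobf (t - 1) = 0 := by
  obtain ⟨m, rfl⟩ : ∃ m, t = m + 2 := ⟨t - 2, by omega⟩
  simp only [mobf]
  have h1 : m + 2 - 1 = m + 1 := by omega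
  have h3 : ((m + 2 : ℕ) - 1 : ℤ) = (m + 1 : ℤ) := by push_cast; ring
  rw [h1, h3]
  simp only [Nat.add_sub_cancel, Nat.factorial_succ, pow_succ]
  push_cast
  ring

variable {Q : Type*} [Fintype Q] [DecidableEq Q]

instance finpartitionFinite (s : Finset Q) : Finite (Finpartition s) :=
  Finite.of_injective (fun P => P.parts) (fun _ _ h => Finpartition.ext h)

noncomputable instance finpartitionFintype (s : Finset Q) : Fintype (Finpartition s) :=
  Fintype.ofFinite _

def Gfun (R : Q → Q → Prop) (ps : Finset (Finset Q)) : ℤ :=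
  if ∀ A ∈ ps, ∀ q ∈ A, ∀ q' ∈ A, R q q' then ∏ A ∈ ps, mobf A.card else 0

lemma Gfun_insert (R : Q → Q → Prop) {A : Finset Q} {ps : Finset (Finset Q)} (hA : A ∉ ps) :
    Gfun R (insert A ps) = (if ∀ q ∈ A, ∀ q' ∈ A, R q q' then mobf A.card else 0) * Gfun R ps := by
  unfold Gfun
  by_cases h1 : ∀ q ∈ A, ∀ q' ∈ A, R q q'
  · by_cases h2 : ∀ B ∈ ps, ∀ q ∈ B, ∀ q' ∈ B, R q q'
    · rw [if_pos, if_pos h1, if_pos h2, Finset.prod_insert hA]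
      intro B hB
      rcases Finset.mem_insert.1 hB with rfl | hB
      · exact h1
      · exact h2 B hB
    · rw [if_neg, if_pos h1, if_neg h2, mul_zero]
      intro h
      exact h2 fun B hB => h B (Finset.mem_insert_of_mem hB)
  · rw [if_neg, if_neg h1, zero_mul]
    intro h
    exact h1 (h A (Finset.mem_insert_self A ps))

lemma parts_avoid {s : Finset Q} (P : Finpartition s) {A : Finset Q} (hA : A ∈ P.parts) :
    (P.avoid A).parts = P.parts.erase A := by
  ext c
  rw [Finpartition.mem_avoid, Finset.mem_erase]
  constructor
  · rintro ⟨d, hd, hdA, rfl⟩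
    have hne : d ≠ A := by rintro rfl; exact hdA le_rfl
    have hdisj : Disjoint d A := P.disjoint hd hA hne
    rw [Finset.sdiff_eq_self_of_disjoint hdisj]
    exact ⟨hne, hd⟩
  · rintro ⟨hne, hc⟩
    refine ⟨c, hc, ?_, ?_⟩
    · intro hle
      exact P.ne_bot hc ((P.disjoint hc hA hne).eq_bot_of_le hle)
    · exact Finset.sdiff_eq_self_of_disjoint (P.disjoint hc hA hne)


lemma fiber_sum (R : Q → Q → Prop) {s : Finset Q} {a : Q} (ha : a ∈ s)
    {A : Finset Q} (haA : a ∈ A) (hAs : A ⊆ s) :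
    ∑ P ∈ Finset.univ.filter (fun P : Finpartition s => P.part a = A), Gfun R P.parts
      = ∑ P' : Finpartition (s \ A), Gfun R (insert A P'.parts) := by
  have hAne : A ≠ ⊥ := by
    rw [Finset.bot_eq_empty]
    exact Finset.nonempty_iff_ne_empty.1 ⟨a, haA⟩
  have hdisj : Disjoint (s \ A) A := Finset.sdiff_disjoint
  have hsup : (s \ A) ⊔ A = s := by
    rw [Finset.sup_eq_union]
    exact Finset.sdiff_union_of_subset hAs
  have hAnotmem : ∀ P' : Finpartition (s \ A), A ∉ P'.parts := by
    intro P' hmem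
    have := P'.le hmem haA
    simp [Finset.mem_sdiff, haA] at this
  refine Finset.sum_nbij' (fun P => P.avoid A) (fun P' => P'.extend hAne hdisj hsup) ?_ ?_ ?_ ?_ ?_
  · intro P hP
    exact Finset.mem_univ _
  · intro P' hP'
    rw [Finset.mem_filter]
    refine ⟨Finset.mem_univ _, ?_⟩
    exact Finpartition.part_eq_of_mem _ (by simp [Finpartition.extend]) haA
  · intro P hP
    rw [Finset.mem_filter] at hP
    have hAP : A ∈ P.parts := hP.2 ▸ P.part_mem.2 ha
    apply Finpartition.ext
    rw [Finpartition.extend_parts, parts_avoid P hAP, Finset.insert_erase hAP]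
  · intro P' hP'
    apply Finpartition.ext
    rw [parts_avoid _ (by simp [Finpartition.extend]), Finpartition.extend_parts,
      Finset.erase_insert (hAnotmem P')]
  · intro P hP
    rw [Finset.mem_filter] at hP
    have hAP : A ∈ P.parts := hP.2 ▸ P.part_mem.2 ha
    rw [parts_avoid P hAP, Finset.insert_erase hAP]


/-- The core Möbius-type identity, by strong induction on the ground finset. -/
lemma core (R : Q → Q → Prop) (hrefl : ∀ a, R a a) (hsymm : ∀ {a b}, R a b → R b a)
    (htrans : ∀ {a b c}, R a b → R b c → R a c) (s : Finset Q) :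
    ∑ P : Finpartition s, Gfun R P.parts
      = if ∀ q ∈ s, ∀ q' ∈ s, R q q' → q = q' then 1 else 0 := by
  induction s using Finset.strongInduction with
  | _ s ih =>
  rcases s.eq_empty_or_nonempty with rfl | ⟨a, ha⟩
  · have hparts : ∀ P : Finpartition (∅ : Finset Q), P.parts = ∅ := by
      intro P
      rw [Finset.eq_empty_iff_forall_notMem]
      intro B hB
      have hle := P.le hB
      have hBe : B = ∅ := Finset.subset_empty.1 hle
      rw [hBe] at hB
      exact P.bot_notMem hB
    haveI : Unique (Finpartition (∅ : Finset Q)) :=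
      ⟨⟨⊥⟩, fun P => Finpartition.ext (by rw [hparts P, hparts])⟩
    rw [Fintype.sum_unique, hparts]
    simp [Gfun]
  · -- nonempty case
    set T := s.filter (R a) with hT
    have haT : a ∈ T := Finset.mem_filter.2 ⟨ha, hrefl a⟩
    have hTs : T ⊆ s := Finset.filter_subset _ _
    -- step 1: fiberwise
    have step1 : ∑ P : Finpartition s, Gfun R P.parts
        = ∑ A ∈ (s.powerset.filter (fun A => a ∈ A)),
            ∑ P ∈ Finset.univ.filter (fun P : Finpartition s => P.part a = A),
              Gfun R P.parts := by
      rw [Finset.sum_fiberwise_of_maps_to]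
      intro P _
      rw [Finset.mem_filter, Finset.mem_powerset]
      exact ⟨P.le (P.part_mem.2 ha), P.mem_part ha⟩
    rw [step1]
    -- step 2: rewrite each fiber
    have step2 : ∀ A ∈ s.powerset.filter (fun A => a ∈ A),
        ∑ P ∈ Finset.univ.filter (fun P : Finpartition s => P.part a = A), Gfun R P.parts
          = (if ∀ q ∈ A, ∀ q' ∈ A, R q q' then mobf A.card else 0) *
              (if ∀ q ∈ s \ A, ∀ q' ∈ s \ A, R q q' → q = q' then 1 else 0) := by
      intro A hA
      rw [Finset.mem_filter, Finset.mem_powerset] at hA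
      obtain ⟨hAs, haA⟩ := hA
      rw [fiber_sum R ha haA hAs]
      have hAne : A.Nonempty := ⟨a, haA⟩
      have hAnotmem : ∀ P' : Finpartition (s \ A), A ∉ P'.parts := by
        intro P' hmem
        have := P'.le hmem haA
        simp [Finset.mem_sdiff, haA] at this
      calc ∑ P' : Finpartition (s \ A), Gfun R (insert A P'.parts)
          = ∑ P' : Finpartition (s \ A),
              (if ∀ q ∈ A, ∀ q' ∈ A, R q q' then mobf A.card else 0) * Gfun R P'.parts := by
            exact Finset.sum_congr rfl fun P' _ => Gfun_insert R (hAnotmem P')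
        _ = (if ∀ q ∈ A, ∀ q' ∈ A, R q q' then mobf A.card else 0) *
              ∑ P' : Finpartition (s \ A), Gfun R P'.parts := by rw [Finset.mul_sum]
        _ = _ := by
            rw [ih (s \ A) (Finset.sdiff_ssubset hAs hAne)]
    rw [Finset.sum_congr rfl step2]
    -- introduce T-based form
    have hc1 : ∀ A ∈ s.powerset.filter (fun A => a ∈ A),
        (if ∀ q ∈ A, ∀ q' ∈ A, R q q' then mobf A.card else 0) *
            (if ∀ q ∈ s \ A, ∀ q' ∈ s \ A, R q q' → q = q' then 1 else 0)
          = (if ∀ q ∈ s \ T, ∀ q' ∈ s \ T, R q q' → q = q' then 1 else 0) *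
            (if A ⊆ T ∧ (T \ A).card ≤ 1 then mobf A.card else 0) := by
      intro A hA
      rw [Finset.mem_filter, Finset.mem_powerset] at hA
      obtain ⟨hAs, haA⟩ := hA
      by_cases hsub : A ⊆ T
      · have hgood : ∀ q ∈ A, ∀ q' ∈ A, R q q' := by
          intro q hq q' hq'
          have h1 : R a q := (Finset.mem_filter.1 (hsub hq)).2
          have h2 : R a q' := (Finset.mem_filter.1 (hsub hq')).2
          exact htrans (hsymm h1) h2
        have hc2 : (∀ q ∈ s \ A, ∀ q' ∈ s \ A, R q q' → q = q')
            ↔ ((T \ A).card ≤ 1 ∧ ∀ q ∈ s \ T, ∀ q' ∈ s \ T, R q q' → q = q') := by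
          constructor
          · intro hdisc
            constructor
            · rw [Finset.card_le_one]
              intro q hq q' hq'
              rw [Finset.mem_sdiff] at hq hq'
              have h1 : R a q := (Finset.mem_filter.1 hq.1).2
              have h2 : R a q' := (Finset.mem_filter.1 hq'.1).2
              exact hdisc q (Finset.mem_sdiff.2 ⟨hTs hq.1, hq.2⟩)
                q' (Finset.mem_sdiff.2 ⟨hTs hq'.1, hq'.2⟩) (htrans (hsymm h1) h2)
            · intro q hq q' hq' hR
              rw [Finset.mem_sdiff] at hq hq'
              exact hdisc q (Finset.mem_sdiff.2 ⟨hq.1, fun h => hq.2 (hsub h)⟩)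
                q' (Finset.mem_sdiff.2 ⟨hq'.1, fun h => hq'.2 (hsub h)⟩) hR
          · rintro ⟨hcard, hdisc⟩ q hq q' hq' hR
            rw [Finset.mem_sdiff] at hq hq'
            by_cases hqT : q ∈ T
            · by_cases hq'T : q' ∈ T
              · exact Finset.card_le_one.1 hcard q (Finset.mem_sdiff.2 ⟨hqT, hq.2⟩)
                  q' (Finset.mem_sdiff.2 ⟨hq'T, hq'.2⟩)
              · exfalso
                have h1 : R a q := (Finset.mem_filter.1 hqT).2
                exact hq'T (Finset.mem_filter.2 ⟨hq'.1, htrans h1 hR⟩)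
            · by_cases hq'T : q' ∈ T
              · exfalso
                have h1 : R a q' := (Finset.mem_filter.1 hq'T).2
                exact hqT (Finset.mem_filter.2 ⟨hq.1, htrans h1 (hsymm hR)⟩)
              · exact hdisc q (Finset.mem_sdiff.2 ⟨hq.1, hqT⟩)
                  q' (Finset.mem_sdiff.2 ⟨hq'.1, hq'T⟩) hR
        rw [if_pos hgood]
        simp only [hc2]
        by_cases h1 : (T \ A).card ≤ 1 <;>
          by_cases h2 : ∀ q ∈ s \ T, ∀ q' ∈ s \ T, R q q' → q = q' <;>
          simp [h1, h2, hsub, mul_comm]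
      · have hgoodfalse : ¬ ∀ q ∈ A, ∀ q' ∈ A, R q q' := by
          intro hgood
          exact hsub fun q hq => Finset.mem_filter.2 ⟨hAs hq, hgood a haA q hq⟩
        simp [hgoodfalse, hsub]
    rw [Finset.sum_congr rfl hc1, ← Finset.mul_sum]
    -- compute the remaining sum
    have hD : (s.powerset.filter (fun A => a ∈ A)).filter
          (fun A => A ⊆ T ∧ (T \ A).card ≤ 1)
        = insert T ((T.erase a).image (fun x => T.erase x)) := by
      ext A
      simp only [Finset.mem_filter, Finset.mem_powerset, Finset.mem_insert, Finset.mem_image]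
      constructor
      · rintro ⟨⟨hAs, haA⟩, hsub, hcard⟩
        interval_cases h : (T \ A).card
        · left
          have : T ⊆ A := Finset.sdiff_eq_empty_iff_subset.1 (Finset.card_eq_zero.1 h)
          exact Finset.Subset.antisymm hsub this
        · right
          obtain ⟨x, hx⟩ := Finset.card_eq_one.1 h
          have hxT : x ∈ T \ A := hx ▸ Finset.mem_singleton_self x
          rw [Finset.mem_sdiff] at hxT
          refine ⟨x, Finset.mem_erase.2 ⟨fun hxa => hxT.2 (hxa ▸ haA), hxT.1⟩, ?_⟩
          ext y
          rw [Finset.mem_erase]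
          constructor
          · rintro ⟨hyx, hyT⟩
            by_contra hyA
            have hmem : y ∈ T \ A := Finset.mem_sdiff.2 ⟨hyT, hyA⟩
            rw [hx, Finset.mem_singleton] at hmem
            exact hyx hmem
          · intro hy
            exact ⟨fun hyx => hxT.2 (hyx ▸ hy), hsub hy⟩
      · rintro (rfl | ⟨x, hx, rfl⟩)
        · exact ⟨⟨hTs, haT⟩, Finset.Subset.refl _, by simp⟩
        · rw [Finset.mem_erase] at hx
          have h1 : T \ T.erase x = {x} := by
            ext y
            simp only [Finset.mem_sdiff, Finset.mem_erase, Finset.mem_singleton, not_and]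
            constructor
            · rintro ⟨hyT, h⟩
              by_contra hyx
              exact (h hyx) hyT
            · rintro rfl
              exact ⟨hx.2, fun h _ => absurd rfl h⟩
          refine ⟨⟨fun y hy => hTs (Finset.mem_of_mem_erase hy),
            Finset.mem_erase.2 ⟨fun h => hx.1 h.symm, haT⟩⟩, Finset.erase_subset x T, ?_⟩
          rw [h1]
          simp
    rw [← Finset.sum_filter, hD]
    have hTnotmem : T ∉ (T.erase a).image (fun x => T.erase x) := by
      rw [Finset.mem_image]
      rintro ⟨x, hx, hxe⟩
      rw [Finset.mem_erase] at hx
      have : x ∈ T.erase x := hxe.symm ▸ hx.2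
      exact (Finset.mem_erase.1 this).1 rfl
    rw [Finset.sum_insert hTnotmem, Finset.sum_image]
    swap
    · intro x hxm y hym hxy
      rw [Finset.mem_coe, Finset.mem_erase] at hxm hym
      by_contra hne
      have hx' : x ∈ T.erase y := Finset.mem_erase.2 ⟨hne, hxm.2⟩
      have hxy' : T.erase x = T.erase y := hxy
      rw [← hxy'] at hx'
      exact (Finset.mem_erase.1 hx').1 rfl
    have hcardsum : ∑ x ∈ T.erase a, mobf ((T.erase x).card)
        = ((T.card - 1 : ℕ) : ℤ) * mobf (T.card - 1) := by
      have hcongr : ∀ x ∈ T.erase a, mobf ((T.erase x).card) = mobf (T.card - 1) := fun x hx => by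
        rw [Finset.card_erase_of_mem (Finset.mem_of_mem_erase hx)]
      rw [Finset.sum_congr rfl hcongr, Finset.sum_const, Finset.card_erase_of_mem haT,
        nsmul_eq_mul]
    rw [hcardsum]
    rcases Nat.lt_or_ge 1 T.card with ht2 | ht1
    · have hc : ((T.card - 1 : ℕ) : ℤ) = (T.card : ℤ) - 1 := by
        rw [Nat.cast_sub (by omega : 1 ≤ T.card)]
        simp
      have hzero : mobf T.card + ((T.card - 1 : ℕ) : ℤ) * mobf (T.card - 1) = 0 := by
        rw [hc]
        exact mobf_step (by omega)
      rw [hzero, mul_zero]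
      have hnd : ¬ ∀ q ∈ s, ∀ q' ∈ s, R q q' → q = q' := by
        obtain ⟨x, hx, y, hy, hxy⟩ := Finset.one_lt_card.1 ht2
        intro hdisc
        have hRx : R a x := (Finset.mem_filter.1 hx).2
        have hRy : R a y := (Finset.mem_filter.1 hy).2
        exact hxy (hdisc x (hTs hx) y (hTs hy) (htrans (hsymm hRx) hRy))
      rw [if_neg hnd]
    · have ht : T.card = 1 := le_antisymm ht1 (Finset.card_pos.2 ⟨a, haT⟩)
      have hTa : T = {a} := by
        obtain ⟨b, hb⟩ := Finset.card_eq_one.1 ht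
        rw [hb] at haT ⊢
        rw [Finset.mem_singleton] at haT
        rw [haT]
      have hiff : (∀ q ∈ s \ T, ∀ q' ∈ s \ T, R q q' → q = q')
          ↔ (∀ q ∈ s, ∀ q' ∈ s, R q q' → q = q') := by
        constructor
        · intro hd q hq q' hq' hR
          by_cases hqa : q = a
          · subst hqa
            have hq'T : q' ∈ T := Finset.mem_filter.2 ⟨hq', hR⟩
            rw [hTa, Finset.mem_singleton] at hq'T
            exact hq'T.symm
          · by_cases hq'a : q' = a
            · subst hq'a
              have hqT : q ∈ T := Finset.mem_filter.2 ⟨hq, hsymm hR⟩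
              rw [hTa, Finset.mem_singleton] at hqT
              exact hqT
            · refine hd q (Finset.mem_sdiff.2 ⟨hq, ?_⟩) q' (Finset.mem_sdiff.2 ⟨hq', ?_⟩) hR
              · rw [hTa, Finset.mem_singleton]; exact hqa
              · rw [hTa, Finset.mem_singleton]; exact hq'a
        · intro hd q hq q' hq'
          exact hd q (Finset.mem_sdiff.1 hq).1 q' (Finset.mem_sdiff.1 hq').1
      rw [ht]
      simp only [hiff]
      norm_num [mobf_one]


instance setoidFinite {α : Type*} [Finite α] : Finite (Setoid α) :=
  Finite.of_injective (fun s : Setoid α => s.r)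
    (fun s t h => Setoid.ext fun x y => by rw [show s.r = t.r from h])

variable {α : Type*} [Fintype α] [DecidableEq α]

noncomputable instance : Fintype (Setoid α) := Fintype.ofFinite _

/-- Lift a setoid `σ` to the quotient by `π`, via representatives. -/
def liftRel (π σ : Setoid α) : Setoid (Quotient π) :=
  ⟨fun q q' => σ.r q.out q'.out,
    ⟨fun _ => σ.refl _, fun h => σ.symm h, fun h1 h2 => σ.trans h1 h2⟩⟩

lemma out_rel (π : Setoid α) (a : α) : π.r (Quotient.mk π a).out a :=
  Quotient.exact (Quotient.out_eq _)

lemma liftRel_mk {π σ : Setoid α} (hπσ : π ≤ σ) (a b : α) :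
    (liftRel π σ).r (Quotient.mk π a) (Quotient.mk π b) ↔ σ.r a b := by
  constructor
  · intro h
    exact σ.trans (σ.symm (hπσ (out_rel π a))) (σ.trans h (hπσ (out_rel π b)))
  · intro h
    exact σ.trans (hπσ (out_rel π a)) (σ.trans h (σ.symm (hπσ (out_rel π b))))

lemma finpartition_ext_part {Q : Type*} [Fintype Q] [DecidableEq Q]
    (P₁ P₂ : Finpartition (univ : Finset Q)) (h : ∀ q, P₁.part q = P₂.part q) : P₁ = P₂ := by
  apply Finpartition.ext
  ext A
  constructor
  · intro hA
    obtain ⟨x, hx⟩ := P₁.nonempty_of_mem_parts hA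
    have h1 : P₁.part x = A := Finpartition.part_eq_of_mem _ hA hx
    rw [← h1, h]
    exact P₂.part_mem.2 (mem_univ x)
  · intro hA
    obtain ⟨x, hx⟩ := P₂.nonempty_of_mem_parts hA
    have h1 : P₂.part x = A := Finpartition.part_eq_of_mem _ hA hx
    rw [← h1, ← h]
    exact P₁.part_mem.2 (mem_univ x)

section MS
variable (π σ ρ : Setoid α)

/-- the finpartition of the quotient associated to `σ ≥ π` -/
noncomputable def toPart (π σ : Setoid α) : Finpartition (univ : Finset (Quotient π)) :=
  Finpartition.ofSetoid (liftRel π σ)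

lemma mem_part_toPart (q q' : Quotient π) :
    q' ∈ (toPart π σ).part q ↔ σ.r q.out q'.out :=
  Finpartition.mem_part_ofSetoid_iff_rel

lemma mobius_eq_prod (hπσ : π ≤ σ) :
    mobius π σ = ∏ A ∈ (toPart π σ).parts, mobf A.card := by
  have h0 : mobius π σ = ∏ B : Quotient σ, mobf (lam π σ B) := by
    rw [mobius]
    rw [finprod_eq_prod_of_fintype]
    rfl
  rw [h0]
  refine Finset.prod_bij (fun B _ => (toPart π σ).part (Quotient.mk π B.out)) ?_ ?_ ?_ ?_
  · intro B _
    exact (toPart π σ).part_mem.2 (mem_univ _)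
  · intro B _ C _ h
    have h1 : (Quotient.mk π C.out) ∈ (toPart π σ).part (Quotient.mk π B.out) := by
      rw [h]
      exact (toPart π σ).mem_part (mem_univ _)
    rw [mem_part_toPart] at h1
    have h2 : σ.r B.out C.out :=
      σ.trans (σ.symm (hπσ (out_rel π B.out))) (σ.trans h1 (hπσ (out_rel π C.out)))
    rw [← Quotient.out_eq B, ← Quotient.out_eq C]
    exact Quotient.sound h2
  · intro A hA
    obtain ⟨q, hq⟩ := (toPart π σ).nonempty_of_mem_parts hA
    refine ⟨Quotient.mk σ q.out, mem_univ _, ?_⟩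
    have hrel : σ.r q.out (Quotient.mk π (Quotient.mk σ q.out).out).out := by
      have h1 : σ.r ((Quotient.mk σ q.out).out) q.out := out_rel σ q.out
      have h2 : π.r (Quotient.mk π (Quotient.mk σ q.out).out).out
          ((Quotient.mk σ q.out).out) := out_rel π _
      exact σ.symm (σ.trans (hπσ h2) h1)
  -- A = part q; part (mk (mk q.out).out) = part q since related
    have : (Quotient.mk π (Quotient.mk σ q.out).out) ∈ (toPart π σ).part q := by
      rw [mem_part_toPart]
      exact hrel
    have h3 := Finpartition.part_eq_of_mem (toPart π σ)
      ((toPart π σ).part_mem.2 (mem_univ q)) this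
    rw [h3]
    exact Finpartition.part_eq_of_mem _ hA hq
  · intro B _
    congr 1
    -- lam π σ B = card of the part
    rw [lam]
    have hiff : ∀ c : Quotient π,
        (Quotient.mk σ c.out = B) ↔ c ∈ (toPart π σ).part (Quotient.mk π B.out) := by
      intro c
      rw [mem_part_toPart]
      constructor
      · intro h
        have h1 : σ.r c.out B.out := by
          have := out_rel σ c.out
          rw [h] at this
          exact σ.symm this
        exact σ.trans (hπσ (out_rel π B.out)) (σ.symm h1)
      · intro h
        have h1 : σ.r B.out c.out :=
          σ.trans (σ.symm (hπσ (out_rel π B.out))) h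
        rw [← Quotient.out_eq B]
        exact Quotient.sound (σ.symm h1)
    rw [Nat.card_congr (Equiv.subtypeEquivRight hiff)]
    rw [Nat.card_eq_fintype_card]
    exact Fintype.card_coe _


lemma mobius_sum (π ρ : Setoid α) :
    ∑ σ : Setoid α, (if π ≤ σ ∧ σ ≤ ρ then mobius π σ else 0) = if π = ρ then 1 else 0 := by
  by_cases hπρ : π ≤ ρ
  · set R : Quotient π → Quotient π → Prop := fun q q' => ρ.r q.out q'.out with hRdef
    have hcore := core R (fun q => ρ.refl _) (fun h => ρ.symm h) (fun h1 h2 => ρ.trans h1 h2)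
      (univ : Finset (Quotient π))
    have hbij : ∑ σ ∈ univ.filter (fun σ : Setoid α => π ≤ σ ∧ σ ≤ ρ), mobius π σ
        = ∑ P ∈ univ.filter (fun P : Finpartition (univ : Finset (Quotient π)) =>
            ∀ A ∈ P.parts, ∀ q ∈ A, ∀ q' ∈ A, R q q'), ∏ A ∈ P.parts, mobf A.card := by
      refine Finset.sum_nbij' (fun σ => toPart π σ)
        (fun P => ⟨fun a b => P.part (Quotient.mk π a) = P.part (Quotient.mk π b),
          ⟨fun _ => rfl, fun h => h.symm, fun h1 h2 => h1.trans h2⟩⟩) ?_ ?_ ?_ ?_ ?_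
      · intro σ hσ
        rw [Finset.mem_filter] at hσ
        obtain ⟨-, h1, h2⟩ := hσ
        rw [Finset.mem_filter]
        refine ⟨Finset.mem_univ _, ?_⟩
        intro A hA q hq q' hq'
        have hpart : (toPart π σ).part q = A :=
          Finpartition.part_eq_of_mem _ hA hq
        have hmem : q' ∈ (toPart π σ).part q := hpart ▸ hq'
        rw [mem_part_toPart] at hmem
        exact h2 hmem
      · intro P hP
        rw [Finset.mem_filter] at hP ⊢
        refine ⟨Finset.mem_univ _, ?_, ?_⟩
        · intro a b hab
          show P.part (Quotient.mk π a) = P.part (Quotient.mk π b)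
          rw [Quotient.sound hab]
        · intro a b hab
          replace hab : P.part (Quotient.mk π a) = P.part (Quotient.mk π b) := hab
          have hb : Quotient.mk π b ∈ P.part (Quotient.mk π a) := by
            rw [hab]
            exact P.mem_part (mem_univ _)
          have hR : R (Quotient.mk π a) (Quotient.mk π b) :=
            hP.2 _ (P.part_mem.2 (mem_univ _)) _ (P.mem_part (mem_univ _)) _ hb
          exact ρ.trans (ρ.symm (hπρ (out_rel π a))) (ρ.trans hR (hπρ (out_rel π b)))
      · intro σ hσ
        rw [Finset.mem_filter] at hσ
        obtain ⟨-, h1, h2⟩ := hσ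
        apply Setoid.ext
        intro x y
        constructor
        · intro h
          replace h : (toPart π σ).part (Quotient.mk π x) = (toPart π σ).part (Quotient.mk π y) := h
          have hy : Quotient.mk π y ∈ (toPart π σ).part (Quotient.mk π x) := by
            rw [h]
            exact (toPart π σ).mem_part (mem_univ _)
          rw [mem_part_toPart] at hy
          exact σ.trans (σ.symm (h1 (out_rel π x))) (σ.trans hy (h1 (out_rel π y)))
        · intro h
          show (toPart π σ).part (Quotient.mk π x) = (toPart π σ).part (Quotient.mk π y)
          have hy : Quotient.mk π y ∈ (toPart π σ).part (Quotient.mk π x) := by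
            rw [mem_part_toPart]
            exact σ.trans (h1 (out_rel π x)) (σ.trans h (σ.symm (h1 (out_rel π y))))
          exact (((toPart π σ).mem_part_iff_part_eq_part (mem_univ _) (mem_univ _)).1 hy).symm
      · intro P hP
        apply finpartition_ext_part
        intro q
        ext y
        rw [mem_part_toPart]
        show (P.part (Quotient.mk π q.out) = P.part (Quotient.mk π y.out)) ↔ _
        rw [Quotient.out_eq, Quotient.out_eq]
        constructor
        · intro h
          exact (P.mem_part_iff_part_eq_part (mem_univ y) (mem_univ q)).2 h.symm
        · intro h
          exact ((P.mem_part_iff_part_eq_part (mem_univ y) (mem_univ q)).1 h).symm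
      · intro σ hσ
        rw [Finset.mem_filter] at hσ
        exact mobius_eq_prod π σ hσ.2.1
    calc ∑ σ : Setoid α, (if π ≤ σ ∧ σ ≤ ρ then mobius π σ else 0)
        = ∑ σ ∈ univ.filter (fun σ : Setoid α => π ≤ σ ∧ σ ≤ ρ), mobius π σ :=
          (Finset.sum_filter _ _).symm
      _ = ∑ P ∈ univ.filter (fun P : Finpartition (univ : Finset (Quotient π)) =>
            ∀ A ∈ P.parts, ∀ q ∈ A, ∀ q' ∈ A, R q q'), ∏ A ∈ P.parts, mobf A.card := hbij
      _ = ∑ P : Finpartition (univ : Finset (Quotient π)), Gfun R P.parts := by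
          rw [Finset.sum_filter]
          apply Finset.sum_congr rfl
          intro P _
          rw [Gfun]
      _ = if ∀ q ∈ (univ : Finset (Quotient π)), ∀ q' ∈ univ, R q q' → q = q' then 1 else 0 :=
          hcore
      _ = if π = ρ then 1 else 0 := by
          congr 1
          simp only [eq_iff_iff]
          constructor
          · intro h
            refine le_antisymm hπρ ?_
            intro a b hab
            have hR : R (Quotient.mk π a) (Quotient.mk π b) :=
              ρ.trans (hπρ (out_rel π a)) (ρ.trans hab (ρ.symm (hπρ (out_rel π b))))
            exact Quotient.exact (h _ (mem_univ _) _ (mem_univ _) hR)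
          · rintro rfl q _ q' _ hR
            rw [← Quotient.out_eq q, ← Quotient.out_eq q']
            exact Quotient.sound hR
  · rw [if_neg (by rintro rfl; exact hπρ le_rfl)]
    apply Finset.sum_eq_zero
    intro σ _
    rw [if_neg]
    rintro ⟨h1, h2⟩
    exact hπρ (le_trans h1 h2)

end MS

variable {k N : ℕ}

lemma count_perms (i j : Fin k → Fin N) (h : Setoid.ker i = Setoid.ker j) :
    (univ.filter (fun g : Equiv.Perm (Fin N) => ∀ l, g (i l) = j l)).card
      = Nat.factorial (N - numBlocks (Setoid.ker i)) := by
  set S : Set (Fin N) := Set.range i with hS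
  set T : Set (Fin N) := Set.range j with hT
  set r : ℕ := numBlocks (Setoid.ker i) with hr
  have hcardS : Fintype.card S = r := by
    rw [← Nat.card_eq_fintype_card, hr, numBlocks]
    exact (Nat.card_congr (Setoid.quotientKerEquivRange i)).symm
  have hcardT : Fintype.card T = r := by
    rw [← Nat.card_eq_fintype_card, hr, numBlocks, h]
    exact (Nat.card_congr (Setoid.quotientKerEquivRange j)).symm
  have hST : Fintype.card S = Fintype.card T := by rw [hcardS, hcardT]
  have hSTc : Fintype.card ↥Sᶜ = Fintype.card ↥Tᶜ := by
    rw [Fintype.card_compl_set, Fintype.card_compl_set, hST]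
  have hfact1 : ∀ (g : Equiv.Perm (Fin N)), (∀ l, g (i l) = j l) →
      ∀ x : Fin N, x ∈ S ↔ g x ∈ T := by
    intro g hg x
    constructor
    · rintro ⟨l, rfl⟩
      exact ⟨l, (hg l).symm⟩
    · rintro ⟨l, hl⟩
      have : g (i l) = g x := by rw [hg l, hl]
      exact ⟨l, g.injective this⟩
  -- the map u : S → T
  have hker : ∀ a b, i a = i b → j a = j b := by
    intro a b hab
    have h1 : (Setoid.ker i).r a b := hab
    rw [h] at h1
    exact h1
  have hker' : ∀ a b, j a = j b → i a = i b := by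
    intro a b hab
    have h1 : (Setoid.ker j).r a b := hab
    rw [← h] at h1
    exact h1
  let u : S → T := fun x => ⟨j (Classical.choose x.2), Set.mem_range_self _⟩
  have hu : ∀ (x : S) (l : Fin k), i l = x.1 → (u x).1 = j l := by
    intro x l hl
    have hc : i (Classical.choose x.2) = x.1 := Classical.choose_spec x.2
    exact hker _ _ (hc.trans hl.symm)
  have huinj : Function.Injective u := by
    intro x y hxy
    have h1 : j (Classical.choose x.2) = j (Classical.choose y.2) := congrArg Subtype.val hxy
    have h2 : i (Classical.choose x.2) = i (Classical.choose y.2) := hker' _ _ h1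
    have hx : i (Classical.choose x.2) = x.1 := Classical.choose_spec x.2
    have hy : i (Classical.choose y.2) = y.1 := Classical.choose_spec y.2
    exact Subtype.ext (hx ▸ hy ▸ h2)
  let φ : S ≃ T := Equiv.ofBijective u ((Fintype.bijective_iff_injective_and_card u).2 ⟨huinj, hST⟩)
  have hφ : ∀ (l : Fin k) (hm : i l ∈ S), (φ ⟨i l, hm⟩).1 = j l := fun l hm => hu _ l rfl
  -- injection 1
  let Φ : {g : Equiv.Perm (Fin N) // ∀ l, g (i l) = j l} → (↥Sᶜ ≃ ↥Tᶜ) := fun g =>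
    g.1.subtypeEquiv (fun x => by
      simp only [Set.mem_compl_iff]
      exact not_congr (hfact1 g.1 g.2 x))
  have hΦinj : Function.Injective Φ := by
    intro g₁ g₂ hg
    apply Subtype.ext
    apply Equiv.ext
    intro x
    by_cases hx : x ∈ S
    · obtain ⟨l, rfl⟩ := hx
      rw [g₁.2 l, g₂.2 l]
    · have := congrArg (fun e => (e ⟨x, hx⟩ : ↥Tᶜ)) hg
      simpa [Φ, Equiv.subtypeEquiv] using this
  -- injection 2
  let Ψ : (↥Sᶜ ≃ ↥Tᶜ) → Equiv.Perm (Fin N) := fun e =>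
    ((Equiv.Set.sumCompl S).symm.trans ((φ.sumCongr e).trans (Equiv.Set.sumCompl T)))
  have hΨ1 : ∀ e l, Ψ e (i l) = j l := by
    intro e l
    have hm : i l ∈ S := Set.mem_range_self l
    simp only [Ψ, Equiv.trans_apply]
    rw [Equiv.Set.sumCompl_symm_apply_of_mem hm]
    simp only [Equiv.sumCongr_apply, Sum.map_inl, Equiv.Set.sumCompl_apply_inl]
    exact hφ l hm
  have hΨ2 : ∀ e (x : Fin N) (hx : x ∉ S), Ψ e x = (e ⟨x, hx⟩ : Fin N) := by
    intro e x hx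
    simp only [Ψ, Equiv.trans_apply]
    rw [Equiv.Set.sumCompl_symm_apply_of_notMem hx]
    simp
  have hΨinj : Function.Injective (fun e => (⟨Ψ e, hΨ1 e⟩ :
      {g : Equiv.Perm (Fin N) // ∀ l, g (i l) = j l})) := by
    intro e₁ e₂ he
    have hval : Ψ e₁ = Ψ e₂ := congrArg Subtype.val he
    apply Equiv.ext
    rintro ⟨x, hx⟩
    apply Subtype.ext
    have h1 := hΨ2 e₁ x hx
    have h2 := hΨ2 e₂ x hx
    rw [← h1, ← h2, hval]
  have hcount : Fintype.card {g : Equiv.Perm (Fin N) // ∀ l, g (i l) = j l}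
      = Fintype.card (↥Sᶜ ≃ ↥Tᶜ) :=
    le_antisymm (Fintype.card_le_of_injective Φ hΦinj)
      (Fintype.card_le_of_injective _ hΨinj)
  rw [← Fintype.card_subtype, hcount, Fintype.card_equiv (Fintype.equivOfCardEq hSTc),
    Fintype.card_compl_set, hcardS, Fintype.card_fin]

lemma lhs_eval (i j : Fin k → Fin N) :
    ∑ g : Equiv.Perm (Fin N), ∏ l : Fin k, permEntry g (i l) (j l)
      = if Setoid.ker i = Setoid.ker j
          then ((N - numBlocks (Setoid.ker i)).factorial : ℝ) else 0 := by
  have hterm : ∀ g : Equiv.Perm (Fin N), ∏ l : Fin k, permEntry g (i l) (j l)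
      = if (∀ l, g (i l) = j l) then (1 : ℝ) else 0 := by
    intro g
    simp only [permEntry]
    rw [Finset.prod_boole]
    simp
  rw [Finset.sum_congr rfl (fun g _ => hterm g), Finset.sum_boole]
  by_cases h : Setoid.ker i = Setoid.ker j
  · rw [if_pos h, count_perms i j h]
  · rw [if_neg h]
    have hempty : (univ.filter (fun g : Equiv.Perm (Fin N) => ∀ l, g (i l) = j l)) = ∅ := by
      rw [Finset.filter_eq_empty_iff]
      intro g _
      intro hg
      apply h
      apply Setoid.ext
      intro a b
      constructor
      · intro hab
        have h1 : i a = i b := hab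
        show j a = j b
        rw [← hg a, ← hg b, h1]
      · intro hab
        have h1 : j a = j b := hab
        show i a = i b
        exact g.injective (by rw [hg a, hg b, h1])
    rw [hempty]
    simp

lemma numBlocks_le (i : Fin k → Fin N) : numBlocks (Setoid.ker i) ≤ N := by
  have h1 : numBlocks (Setoid.ker i) = Fintype.card (Set.range i) := by
    rw [← Nat.card_eq_fintype_card, numBlocks]
    exact Nat.card_congr (Setoid.quotientKerEquivRange i)
  rw [h1]
  calc Fintype.card (Set.range i) ≤ Fintype.card (Fin N) :=
        Fintype.card_le_of_injective Subtype.val Subtype.val_injective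
    _ = N := Fintype.card_fin N

/-- the Weingarten formula for random permutation matrices. -/
theorem stmt1 (k N : ℕ) (hk : 1 ≤ k) (hN : k ≤ N) (i j : Fin k → Fin N) :
    (1 / (Nat.factorial N : ℝ)) *
        ∑ g : Equiv.Perm (Fin N), ∏ l : Fin k, permEntry g (i l) (j l) =
      ∑ᶠ σ ∈ {σ : Setoid (Fin k) | σ ≤ kerP i},
        ∑ᶠ τ ∈ {τ : Setoid (Fin k) | τ ≤ kerP j}, Wg k N σ τ := by
  have hconv : ∀ (p : Setoid (Fin k) → Prop) (f : Setoid (Fin k) → ℝ),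
      (∑ᶠ σ ∈ {σ : Setoid (Fin k) | p σ}, f σ)
        = ∑ σ : Setoid (Fin k), if p σ then f σ else 0 := by
    intro p f
    have hset : {σ : Setoid (Fin k) | p σ} = ↑(univ.filter p) := by
      ext σ; simp
    rw [hset, finsum_mem_coe_finset, Finset.sum_filter]
  -- abbreviations
  set Ki := kerP i with hKi
  set Kj := kerP j with hKj
  set D : Setoid (Fin k) → ℝ := fun π => (Nat.descFactorial N (numBlocks π) : ℝ) with hD
  set m : Setoid (Fin k) → Setoid (Fin k) → ℝ := fun π σ => ((mobius π σ : ℤ) : ℝ) with hm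
  -- RHS rewriting
  have hRHS : ∑ᶠ σ ∈ {σ : Setoid (Fin k) | σ ≤ Ki},
        ∑ᶠ τ ∈ {τ : Setoid (Fin k) | τ ≤ Kj}, Wg k N σ τ
      = ∑ σ : Setoid (Fin k), ∑ τ : Setoid (Fin k), ∑ π : Setoid (Fin k),
          if (π ≤ σ ∧ σ ≤ Ki) ∧ (π ≤ τ ∧ τ ≤ Kj) then m π σ * m π τ / D π else 0 := by
    rw [hconv]
    apply Finset.sum_congr rfl
    intro σ _
    by_cases hσ : σ ≤ Ki
    · rw [if_pos hσ, hconv]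
      apply Finset.sum_congr rfl
      intro τ _
      by_cases hτ : τ ≤ Kj
      · rw [if_pos hτ, Wg, hconv]
        apply Finset.sum_congr rfl
        intro π _
        by_cases hπ : π ≤ σ ⊓ τ
        · rw [if_pos hπ, if_pos]
          · rw [hm]
            push_cast
            ring
          · rw [le_inf_iff] at hπ
            exact ⟨⟨hπ.1, hσ⟩, hπ.2, hτ⟩
        · rw [if_neg hπ, if_neg]
          rintro ⟨⟨h1, -⟩, h2, -⟩
          exact hπ (le_inf h1 h2)
      · rw [if_neg hτ, eq_comm]
        apply Finset.sum_eq_zero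
        intro π _
        rw [if_neg]
        rintro ⟨-, -, h2⟩
        exact hτ h2
    · rw [if_neg hσ, eq_comm]
      apply Finset.sum_eq_zero
      intro τ _
      apply Finset.sum_eq_zero
      intro π _
      rw [if_neg]
      rintro ⟨⟨-, h1⟩, -⟩
      exact hσ h1
  rw [hRHS]
  have hswap : (∑ σ : Setoid (Fin k), ∑ τ : Setoid (Fin k), ∑ π : Setoid (Fin k),
      if (π ≤ σ ∧ σ ≤ Ki) ∧ (π ≤ τ ∧ τ ≤ Kj) then m π σ * m π τ / D π else 0)
    = ∑ π : Setoid (Fin k), ∑ σ : Setoid (Fin k), ∑ τ : Setoid (Fin k),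
      if (π ≤ σ ∧ σ ≤ Ki) ∧ (π ≤ τ ∧ τ ≤ Kj) then m π σ * m π τ / D π else 0 := by
    have h1 : ∀ σ : Setoid (Fin k), (∑ τ : Setoid (Fin k), ∑ π : Setoid (Fin k),
        if (π ≤ σ ∧ σ ≤ Ki) ∧ (π ≤ τ ∧ τ ≤ Kj) then m π σ * m π τ / D π else 0)
      = ∑ π : Setoid (Fin k), ∑ τ : Setoid (Fin k),
        if (π ≤ σ ∧ σ ≤ Ki) ∧ (π ≤ τ ∧ τ ≤ Kj) then m π σ * m π τ / D π else 0 :=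
      fun σ => Finset.sum_comm
    rw [Finset.sum_congr rfl (fun σ _ => h1 σ)]
    exact Finset.sum_comm
  rw [hswap]
  have hfact : ∀ π : Setoid (Fin k),
      (∑ σ : Setoid (Fin k), ∑ τ : Setoid (Fin k),
        if (π ≤ σ ∧ σ ≤ Ki) ∧ (π ≤ τ ∧ τ ≤ Kj) then m π σ * m π τ / D π else 0)
      = (∑ σ : Setoid (Fin k), if π ≤ σ ∧ σ ≤ Ki then m π σ else 0) *
          (∑ τ : Setoid (Fin k), if π ≤ τ ∧ τ ≤ Kj then m π τ else 0) / D π := by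
    intro π
    rw [eq_comm, Finset.sum_mul, Finset.sum_div]
    apply Finset.sum_congr rfl
    intro σ _
    rw [Finset.mul_sum, Finset.sum_div]
    apply Finset.sum_congr rfl
    intro τ _
    by_cases h1 : π ≤ σ ∧ σ ≤ Ki <;> by_cases h2 : π ≤ τ ∧ τ ≤ Kj <;>
      simp [h1, h2]
  have hmsum : ∀ (ρ π : Setoid (Fin k)),
      (∑ σ : Setoid (Fin k), if π ≤ σ ∧ σ ≤ ρ then m π σ else 0)
        = if π = ρ then (1 : ℝ) else 0 := by
    intro ρ π
    have h1 : (∑ σ : Setoid (Fin k), if π ≤ σ ∧ σ ≤ ρ then m π σ else 0)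
        = ((∑ σ : Setoid (Fin k), if π ≤ σ ∧ σ ≤ ρ then mobius π σ else 0 : ℤ) : ℝ) := by
      rw [Int.cast_sum]
      apply Finset.sum_congr rfl
      intro σ _
      split_ifs <;> simp [hm]
    rw [h1, mobius_sum π ρ]
    split_ifs <;> simp
  have hfinal : (∑ π : Setoid (Fin k), ∑ σ : Setoid (Fin k), ∑ τ : Setoid (Fin k),
      if (π ≤ σ ∧ σ ≤ Ki) ∧ (π ≤ τ ∧ τ ≤ Kj) then m π σ * m π τ / D π else 0)
      = if Ki = Kj then 1 / D Ki else 0 := by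
    rw [Finset.sum_congr rfl (fun π (_ : π ∈ univ) => (hfact π).trans
      (by rw [hmsum Ki π, hmsum Kj π]))]
    by_cases hKK : Ki = Kj
    · rw [if_pos hKK, ← hKK]
      rw [Finset.sum_eq_single_of_mem Ki (Finset.mem_univ Ki) (fun π _ hπ => by simp [hπ])]
      simp
    · rw [if_neg hKK]
      apply Finset.sum_eq_zero
      intro π _
      by_cases h1 : π = Ki
      · subst h1
        simp [hKK]
      · simp [h1]
  rw [hfinal]
  -- LHS
  rw [lhs_eval i j]
  by_cases hKK : Ki = Kj
  · rw [if_pos hKK, if_pos (show Setoid.ker i = Setoid.ker j from hKK)]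
    have hrN : numBlocks (Setoid.ker i) ≤ N := numBlocks_le i
    have hkey : ((N - numBlocks (Setoid.ker i)).factorial : ℝ) *
        (Nat.descFactorial N (numBlocks (Setoid.ker i)) : ℝ) = (N.factorial : ℝ) := by
      rw [← Nat.cast_mul, Nat.factorial_mul_descFactorial hrN]
    have hDpos : (0:ℝ) < (Nat.descFactorial N (numBlocks (Setoid.ker i)) : ℝ) := by
      have hne : Nat.descFactorial N (numBlocks (Setoid.ker i)) ≠ 0 := fun h0 =>
        absurd (Nat.descFactorial_eq_zero_iff_lt.1 h0) (not_lt.2 hrN)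
      exact_mod_cast Nat.pos_of_ne_zero hne
    have hNpos : (0:ℝ) < (N.factorial : ℝ) := by exact_mod_cast N.factorial_pos
    have hgoal : (1 / (N.factorial : ℝ)) * ((N - numBlocks (Setoid.ker i)).factorial : ℝ)
        = 1 / ((Nat.descFactorial N (numBlocks (Setoid.ker i)) : ℝ)) := by
      field_simp
      linarith [hkey]
    exact hgoal
  · rw [if_neg (show ¬ Setoid.ker i = Setoid.ker j from hKK), if_neg hKK, mul_zero]
end WgPerm

end
end

section
/- Fix an integer k ≥ 1 and σ,τ ∈ P(k). Then there exists a constant C > 0 such that for every integer N ≥ k, |Wg_k(σ,τ,N) − μ(σ∧τ,σ)·μ(σ∧τ,τ)·N^{−#(σ∧τ)}| ≤ C·N^{−#(σ∧τ)−1}; in particular N^{#(σ∧τ)}·Wg_k(σ,τ,N) converges to μ(σ∧τ,σ)·μ(σ∧τ,τ) as N → ∞. -/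
open Finset

noncomputable section

namespace WgPerm

instance {α : Type*} [Finite α] : Finite (Setoid α) :=
  Finite.of_injective (fun s : Setoid α => s.r) fun _ _ h =>
    Setoid.ext fun x y => iff_of_eq (congrFun (congrFun h x) y)

lemma descA (k : ℕ) : ∀ n N : ℕ, n ≤ k → k ≤ N → N ^ n ≤ k ^ n * N.descFactorial n := by
  intro n
  induction n with
  | zero => simp
  | succ n ih =>
    intro N hn hN
    have h1 : n ≤ k := Nat.le_of_succ_le hn
    have h2 : N ^ n ≤ k ^ n * N.descFactorial n := ih N h1 hN
    have h3 : N ≤ k * (N - n) := by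
      have hnN : n ≤ N := le_trans h1 hN
      have : N - n ≥ k - n := by omega
      nlinarith [Nat.sub_add_cancel hnN, Nat.sub_add_cancel h1]
    calc N ^ (n+1) = N ^ n * N := by ring
    _ ≤ (k ^ n * N.descFactorial n) * (k * (N - n)) := Nat.mul_le_mul h2 h3
    _ = k ^ (n+1) * N.descFactorial (n+1) := by rw [Nat.descFactorial_succ]; ring

lemma descB : ∀ (m N : ℕ), m ≤ N → N * N ^ m ≤ N * N.descFactorial m + m^2 * N^m := by
  intro m
  induction m with
  | zero => simp
  | succ m ih =>
    intro N hm
    have h1 : m ≤ N := Nat.le_of_succ_le hm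
    have h2 := ih N h1
    have hs : N - m + m = N := Nat.sub_add_cancel h1
    have hd : N * N * N.descFactorial m = N * N.descFactorial (m+1) + m * N * N.descFactorial m := by
      rw [Nat.descFactorial_succ]
      calc N * N * N.descFactorial m = (N - m + m) * N * N.descFactorial m := by rw [hs]
      _ = N * ((N - m) * N.descFactorial m) + m * N * N.descFactorial m := by ring
    have hdp : N.descFactorial m ≤ N ^ m := Nat.descFactorial_le_pow N m
    calc N * N ^ (m+1) = N * (N * N ^ m) := by ring
    _ ≤ N * (N * N.descFactorial m + m^2 * N^m) := Nat.mul_le_mul_left N h2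
    _ = N * N * N.descFactorial m + m^2 * N^(m+1) := by ring
    _ = N * N.descFactorial (m+1) + m * N * N.descFactorial m + m^2 * N^(m+1) := by rw [hd]
    _ ≤ N * N.descFactorial (m+1) + m * N * N^m + m^2 * N^(m+1) := by
        have := Nat.mul_le_mul_left (m * N) hdp; omega
    _ ≤ N * N.descFactorial (m+1) + (m+1)^2 * N^(m+1) := by
        ring_nf; linarith [Nat.zero_le (N*N^m), Nat.zero_le (N*N^m*m)]

lemma descFactorial_pos' {N n : ℕ} (h : n ≤ N) : 0 < N.descFactorial n := by
  rcases Nat.eq_zero_or_pos (N.descFactorial n) with h0 | h0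
  · exact absurd (Nat.descFactorial_eq_zero_iff_lt.mp h0) (not_lt.mpr h)
  · exact h0

lemma numBlocks_le_s3 {k : ℕ} (π : Setoid (Fin k)) : numBlocks π ≤ k := by
  have := Nat.card_le_card_of_surjective (Quotient.mk π) Quot.mk_surjective
  simpa [numBlocks] using this

lemma numBlocks_anti {k : ℕ} {π ρ : Setoid (Fin k)} (h : π ≤ ρ) :
    numBlocks ρ ≤ numBlocks π := by
  have hsurj : Function.Surjective
      (Quotient.map' (id : Fin k → Fin k) (fun a b hab => h hab) :
        Quotient π → Quotient ρ) := by
    intro x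
    induction x using Quotient.ind with
    | _ a => exact ⟨Quotient.mk π a, rfl⟩
  exact Nat.card_le_card_of_surjective _ hsurj

lemma eq_of_le_of_numBlocks_le {k : ℕ} {π ρ : Setoid (Fin k)} (h : π ≤ ρ)
    (hc : numBlocks π ≤ numBlocks ρ) : π = ρ := by
  set f : Quotient π → Quotient ρ :=
    Quotient.map' (id : Fin k → Fin k) (fun a b hab => h hab) with hf
  have hsurj : Function.Surjective f := by
    intro x
    induction x using Quotient.ind with
    | _ a => exact ⟨Quotient.mk π a, rfl⟩
  have hcard : Nat.card (Quotient π) = Nat.card (Quotient ρ) :=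
    le_antisymm hc (Nat.card_le_card_of_surjective f hsurj)
  have hbij : Function.Bijective f :=
    (Nat.bijective_iff_surjective_and_card f).mpr ⟨hsurj, hcard⟩
  refine Setoid.ext fun a b => ⟨fun hab => h hab, fun hab => ?_⟩
  have : f (Quotient.mk π a) = f (Quotient.mk π b) := by
    show (Quotient.mk ρ a) = (Quotient.mk ρ b)
    exact Quotient.sound hab
  have := hbij.injective this
  exact Quotient.exact this

lemma key2 {k m n N : ℕ} (hn : m + 1 ≤ n) (hnk : n ≤ k) (hN : k ≤ N) :
    (1:ℝ) / (Nat.descFactorial N n : ℝ) ≤ (k:ℝ)^k / (N:ℝ)^(m+1) := by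
  have hk1 : 1 ≤ k := by omega
  have hkN : 1 ≤ N := le_trans hk1 hN
  have hD : 0 < Nat.descFactorial N n := descFactorial_pos' (le_trans hnk hN)
  have h1 : N ^ (m+1) ≤ k ^ k * N.descFactorial n := by
    calc N ^ (m+1) ≤ N ^ n := Nat.pow_le_pow_right hkN hn
    _ ≤ k ^ n * N.descFactorial n := descA k n N hnk hN
    _ ≤ k ^ k * N.descFactorial n :=
        Nat.mul_le_mul_right _ (Nat.pow_le_pow_right hk1 hnk)
  have hDr : (0:ℝ) < (Nat.descFactorial N n : ℝ) := by exact_mod_cast hD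
  have hPr : (0:ℝ) < (N:ℝ)^(m+1) := by positivity
  rw [div_le_div_iff₀ hDr hPr]
  have := (Nat.cast_le (α := ℝ)).mpr h1
  push_cast at this ⊢
  linarith

lemma key1 {k m N : ℕ} (hk : 1 ≤ k) (hm : m ≤ k) (hN : k ≤ N) :
    |(1:ℝ) / (Nat.descFactorial N m : ℝ) - 1 / (N:ℝ)^m|
      ≤ ((m:ℝ)^2 * (k:ℝ)^k) / (N:ℝ)^(m+1) := by
  have hmN : m ≤ N := le_trans hm hN
  have hN1 : 1 ≤ N := le_trans hk hN
  have hD : 0 < Nat.descFactorial N m := descFactorial_pos' hmN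
  have hDr : (0:ℝ) < (Nat.descFactorial N m : ℝ) := by exact_mod_cast hD
  have hNr : (0:ℝ) < (N:ℝ) := by exact_mod_cast hN1
  have hNm : (0:ℝ) < (N:ℝ)^m := by positivity
  have hDle : (Nat.descFactorial N m : ℝ) ≤ (N:ℝ)^m := by
    exact_mod_cast Nat.descFactorial_le_pow N m
  -- descB cast
  have hB : (N:ℝ) * (N:ℝ)^m ≤ (N:ℝ) * (Nat.descFactorial N m : ℝ) + (m:ℝ)^2 * (N:ℝ)^m := by
    have := (Nat.cast_le (α := ℝ)).mpr (descB m N hmN)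
    push_cast at this; linarith
  -- descA cast
  have hA : (N:ℝ)^m ≤ (k:ℝ)^k * (Nat.descFactorial N m : ℝ) := by
    have h1 : N ^ m ≤ k ^ k * N.descFactorial m := by
      calc N ^ m ≤ k ^ m * N.descFactorial m := descA k m N hm hN
      _ ≤ k ^ k * N.descFactorial m :=
          Nat.mul_le_mul_right _ (Nat.pow_le_pow_right hk hm)
    have := (Nat.cast_le (α := ℝ)).mpr h1
    push_cast at this; linarith
  have heq : (1:ℝ) / (Nat.descFactorial N m : ℝ) - 1 / (N:ℝ)^m
      = ((N:ℝ)^m - (Nat.descFactorial N m : ℝ)) / ((Nat.descFactorial N m : ℝ) * (N:ℝ)^m) := by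
    field_simp
  rw [heq, abs_of_nonneg (div_nonneg (sub_nonneg.mpr hDle) (by positivity))]
  rw [div_le_div_iff₀ (by positivity) (by positivity)]
  have h2 : (N:ℝ) * ((N:ℝ)^m - (Nat.descFactorial N m : ℝ)) ≤ (m:ℝ)^2 * (N:ℝ)^m := by linarith
  calc ((N:ℝ)^m - (Nat.descFactorial N m : ℝ)) * (N:ℝ)^(m+1)
      = ((N:ℝ) * ((N:ℝ)^m - (Nat.descFactorial N m : ℝ))) * (N:ℝ)^m := by ring
  _ ≤ ((m:ℝ)^2 * (N:ℝ)^m) * (N:ℝ)^m := by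
      apply mul_le_mul_of_nonneg_right h2 (le_of_lt hNm)
  _ ≤ ((m:ℝ)^2 * ((k:ℝ)^k * (Nat.descFactorial N m : ℝ))) * (N:ℝ)^m := by
      have : (m:ℝ)^2 * (N:ℝ)^m ≤ (m:ℝ)^2 * ((k:ℝ)^k * (Nat.descFactorial N m : ℝ)) := by
        apply mul_le_mul_of_nonneg_left hA (by positivity)
      exact mul_le_mul_of_nonneg_right this (le_of_lt hNm)
  _ = (m:ℝ)^2 * (k:ℝ)^k * ((Nat.descFactorial N m : ℝ) * (N:ℝ)^m) := by ring


/-- asymptotics of the Weingarten function. -/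
theorem stmt3 (k : ℕ) (hk : 1 ≤ k) (σ τ : Setoid (Fin k)) :
    (∃ C : ℝ, 0 < C ∧ ∀ N : ℕ, k ≤ N →
        |Wg k N σ τ -
            ((mobius (σ ⊓ τ) σ * mobius (σ ⊓ τ) τ : ℤ) : ℝ) *
              ((N : ℝ) ^ numBlocks (σ ⊓ τ))⁻¹|
          ≤ C * ((N : ℝ) ^ (numBlocks (σ ⊓ τ) + 1))⁻¹) ∧
      Filter.Tendsto
        (fun N : ℕ => (N : ℝ) ^ numBlocks (σ ⊓ τ) * Wg k N σ τ)
        Filter.atTop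
        (nhds ((mobius (σ ⊓ τ) σ * mobius (σ ⊓ τ) τ : ℤ) : ℝ)) := by
  classical
  set m := numBlocks (σ ⊓ τ) with hm
  set A : ℝ := ((mobius (σ ⊓ τ) σ * mobius (σ ⊓ τ) τ : ℤ) : ℝ) with hA
  have hS : ({π : Setoid (Fin k) | π ≤ σ ⊓ τ}).Finite := Set.toFinite _
  set T := hS.toFinset with hT
  have hmem : σ ⊓ τ ∈ T := by simp [hT, Set.Finite.mem_toFinset]
  set c : Setoid (Fin k) → ℝ := fun π => ((mobius π σ * mobius π τ : ℤ) : ℝ) with hc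
  have hWg : ∀ N : ℕ, Wg k N σ τ
      = ∑ π ∈ T, c π / (Nat.descFactorial N (numBlocks π) : ℝ) := by
    intro N
    rw [Wg, finsum_mem_eq_finite_toFinset_sum _ hS]
  have hmk : m ≤ k := numBlocks_le_s3 _
  set C : ℝ := (|A| * (m:ℝ)^2 * (k:ℝ)^k + ∑ π ∈ T, |c π| * (k:ℝ)^k) + 1 with hC
  have hsumnn : 0 ≤ ∑ π ∈ T, |c π| * (k:ℝ)^k :=
    Finset.sum_nonneg (fun π _ => by positivity)
  have hCpos : 0 < C := by
    have h0 : 0 ≤ |A| * (m:ℝ)^2 * (k:ℝ)^k := by positivity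
    linarith
  have hbound : ∀ N : ℕ, k ≤ N →
      |Wg k N σ τ - A * ((N:ℝ)^m)⁻¹| ≤ C * ((N:ℝ)^(m+1))⁻¹ := by
    intro N hN
    have hN1 : 1 ≤ N := le_trans hk hN
    have hNr : (0:ℝ) < N := by exact_mod_cast hN1
    have hP : (0:ℝ) < (N:ℝ)^(m+1) := by positivity
    have hDm : 0 < Nat.descFactorial N m := descFactorial_pos' (le_trans hmk hN)
    have hDmr : (0:ℝ) < (Nat.descFactorial N m : ℝ) := by exact_mod_cast hDm
    have key1' := key1 (k := k) (m := m) (N := N) hk hmk hN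
    have h1 : |c (σ ⊓ τ) / (Nat.descFactorial N (numBlocks (σ ⊓ τ)) : ℝ) - A * ((N:ℝ)^m)⁻¹|
        ≤ |A| * (((m:ℝ)^2 * (k:ℝ)^k) / (N:ℝ)^(m+1)) := by
      have e : c (σ ⊓ τ) / (Nat.descFactorial N (numBlocks (σ ⊓ τ)) : ℝ) - A * ((N:ℝ)^m)⁻¹
          = A * (1 / (Nat.descFactorial N m : ℝ) - 1 / (N:ℝ)^m) := by
        rw [← hm]; show A / _ - _ = _; ring
      rw [e, abs_mul]
      exact mul_le_mul_of_nonneg_left key1' (abs_nonneg A)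
    have h2 : |∑ π ∈ T.erase (σ ⊓ τ), c π / (Nat.descFactorial N (numBlocks π) : ℝ)|
        ≤ ∑ π ∈ T.erase (σ ⊓ τ), |c π| * ((k:ℝ)^k / (N:ℝ)^(m+1)) := by
      refine le_trans (Finset.abs_sum_le_sum_abs _ _) (Finset.sum_le_sum ?_)
      intro π hπ
      have hπT : π ∈ T := Finset.mem_of_mem_erase hπ
      have hπle : π ≤ σ ⊓ τ := by
        have := (Set.Finite.mem_toFinset hS).mp (hT ▸ hπT)
        exact this
      have hπne : π ≠ σ ⊓ τ := Finset.ne_of_mem_erase hπ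
      have hnb : m + 1 ≤ numBlocks π := by
        rcases Nat.lt_or_ge m (numBlocks π) with h | h
        · omega
        · exact absurd (eq_of_le_of_numBlocks_le hπle h) hπne
      have hnk : numBlocks π ≤ k := numBlocks_le_s3 _
      have hD : 0 < Nat.descFactorial N (numBlocks π) :=
        descFactorial_pos' (le_trans hnk hN)
      have hDr : (0:ℝ) < (Nat.descFactorial N (numBlocks π) : ℝ) := by exact_mod_cast hD
      rw [abs_div, abs_of_pos hDr]
      calc |c π| / (Nat.descFactorial N (numBlocks π) : ℝ)
          = |c π| * (1 / (Nat.descFactorial N (numBlocks π) : ℝ)) := by ring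
      _ ≤ |c π| * ((k:ℝ)^k / (N:ℝ)^(m+1)) :=
          mul_le_mul_of_nonneg_left (key2 hnb hnk hN) (abs_nonneg _)
    have h3 : ∑ π ∈ T.erase (σ ⊓ τ), |c π| * ((k:ℝ)^k / (N:ℝ)^(m+1))
        ≤ (∑ π ∈ T, |c π| * (k:ℝ)^k) / (N:ℝ)^(m+1) := by
      rw [Finset.sum_div]
      refine le_trans (le_of_eq (Finset.sum_congr rfl (fun π _ => by ring)))
        (Finset.sum_le_sum_of_subset_of_nonneg (Finset.erase_subset _ _)
          (fun π _ _ => by positivity))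
    rw [hWg N, ← Finset.add_sum_erase T _ hmem]
    calc |c (σ ⊓ τ) / (Nat.descFactorial N (numBlocks (σ ⊓ τ)) : ℝ)
            + (∑ π ∈ T.erase (σ ⊓ τ), c π / (Nat.descFactorial N (numBlocks π) : ℝ))
            - A * ((N:ℝ)^m)⁻¹|
        = |(c (σ ⊓ τ) / (Nat.descFactorial N (numBlocks (σ ⊓ τ)) : ℝ) - A * ((N:ℝ)^m)⁻¹)
            + ∑ π ∈ T.erase (σ ⊓ τ), c π / (Nat.descFactorial N (numBlocks π) : ℝ)| := by
          congr 1; ring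
    _ ≤ |c (σ ⊓ τ) / (Nat.descFactorial N (numBlocks (σ ⊓ τ)) : ℝ) - A * ((N:ℝ)^m)⁻¹|
          + |∑ π ∈ T.erase (σ ⊓ τ), c π / (Nat.descFactorial N (numBlocks π) : ℝ)| :=
        abs_add_le _ _
    _ ≤ |A| * (((m:ℝ)^2 * (k:ℝ)^k) / (N:ℝ)^(m+1))
          + (∑ π ∈ T, |c π| * (k:ℝ)^k) / (N:ℝ)^(m+1) := by
        have := le_trans h2 h3; linarith
    _ = (|A| * (m:ℝ)^2 * (k:ℝ)^k + ∑ π ∈ T, |c π| * (k:ℝ)^k) * ((N:ℝ)^(m+1))⁻¹ := by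
        field_simp
    _ ≤ C * ((N:ℝ)^(m+1))⁻¹ := by
        have : (|A| * (m:ℝ)^2 * (k:ℝ)^k + ∑ π ∈ T, |c π| * (k:ℝ)^k) ≤ C := by
          rw [hC]; linarith
        exact mul_le_mul_of_nonneg_right this (le_of_lt (inv_pos.mpr hP))
  refine ⟨⟨C, hCpos, hbound⟩, ?_⟩
  have h0 : Filter.Tendsto (fun N : ℕ => (N:ℝ)^m * Wg k N σ τ - A) Filter.atTop (nhds 0) := by
    apply squeeze_zero_norm' (a := fun N : ℕ => C * (N:ℝ)⁻¹)
    · filter_upwards [Filter.eventually_ge_atTop k] with N hN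
      have hN1 : 1 ≤ N := le_trans hk hN
      have hNr : (0:ℝ) < N := by exact_mod_cast hN1
      have hNne : (N:ℝ) ≠ 0 := ne_of_gt hNr
      have hNm : (0:ℝ) < (N:ℝ)^m := by positivity
      have hb := hbound N hN
      rw [Real.norm_eq_abs]
      have e : (N:ℝ)^m * Wg k N σ τ - A
          = (N:ℝ)^m * (Wg k N σ τ - A * ((N:ℝ)^m)⁻¹) := by
        field_simp
      rw [e, abs_mul, abs_of_pos hNm]
      calc (N:ℝ)^m * |Wg k N σ τ - A * ((N:ℝ)^m)⁻¹|
          ≤ (N:ℝ)^m * (C * ((N:ℝ)^(m+1))⁻¹) :=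
            mul_le_mul_of_nonneg_left hb (le_of_lt hNm)
      _ = C * (N:ℝ)⁻¹ := by rw [pow_succ]; field_simp
    · have h1 : Filter.Tendsto (fun N : ℕ => ((N:ℝ))⁻¹) Filter.atTop (nhds 0) :=
        tendsto_inv_atTop_zero.comp tendsto_natCast_atTop_atTop
      simpa using h1.const_mul C
  have h2 := h0.add_const A
  simpa using h2

end WgPerm

end
end

section
/- For every integer N ≥ 1, a_0(N) = 1 and a_1(N) = 0; moreover, for every integer k with 2 ≤ k ≤ N, a_k(N) > 0. -/
open Finset

noncomputable section

namespace WgPerm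

/-- `v N l = N^l / (N)_l`. -/
def v (N l : ℕ) : ℝ := (N : ℝ) ^ l / (Nat.descFactorial N l : ℝ)

/-- iterated forward difference of `v`. -/
def D (N : ℕ) : ℕ → ℕ → ℝ
  | 0, s => v N s
  | (k+1), s => D N k (s+1) - D N k s

lemma desc_ne {N l : ℕ} (h : l ≤ N) : (Nat.descFactorial N l : ℝ) ≠ 0 := by
  have : Nat.descFactorial N l ≠ 0 := by
    rw [Ne, Nat.descFactorial_eq_zero_iff_lt]; omega
  exact_mod_cast this

lemma v_pos {N l : ℕ} (hN : 1 ≤ N) (h : l ≤ N) : 0 < v N l := by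
  apply div_pos
  · positivity
  · have : 0 < Nat.descFactorial N l := Nat.pos_of_ne_zero (by
      rw [Ne, Nat.descFactorial_eq_zero_iff_lt]; omega)
    exact_mod_cast this

lemma key {N s : ℕ} (h : s + 1 ≤ N) :
    (N : ℝ) * (v N (s+1) - v N s) = s * v N (s+1) := by
  have d0 : (Nat.descFactorial N s : ℝ) ≠ 0 := desc_ne (by omega)
  have hNs : ((N - s : ℕ) : ℝ) = (N : ℝ) - s := by
    push_cast [Nat.cast_sub (by omega : s ≤ N)]; ring
  have hNs' : (N : ℝ) - s ≠ 0 := by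
    have : (s : ℝ) < N := by exact_mod_cast (by omega : s < N)
    linarith
  unfold v
  rw [Nat.descFactorial_succ, Nat.cast_mul, hNs]
  field_simp
  ring

lemma keyD1 {N s : ℕ} (h : s + 1 ≤ N) :
    (N : ℝ) * D N 1 s = s * v N (s+1) := by
  simpa [D] using key h

lemma leib {N : ℕ} : ∀ k s : ℕ, s + (k+2) ≤ N →
    (N : ℝ) * D N (k+2) s = s * D N (k+1) (s+1) + (k+1) * D N k (s+2) := by
  intro k
  induction k with
  | zero =>
    intro s h
    have e1 := key (N := N) (s := s+1) (by omega)
    have e2 := key (N := N) (s := s) (by omega)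
    simp only [D]
    push_cast at e1 e2 ⊢
    linear_combination e1 - e2
  | succ k ih =>
    intro s h
    have A := ih (s+1) (by omega)
    have B := ih s (by omega)
    simp only [D] at A B ⊢
    push_cast at A B ⊢
    linear_combination A - B

lemma Dpos {N : ℕ} (hN : 1 ≤ N) : ∀ k s : ℕ, s + k ≤ N →
    0 ≤ D N k s ∧ (2 ≤ k → 0 < D N k s) := by
  intro k
  induction k using Nat.strong_induction_on with
  | _ k ih =>
    match k with
    | 0 =>
      intro s h
      refine ⟨(v_pos hN (by omega)).le, by omega⟩
    | 1 =>
      intro s h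
      have e := keyD1 (N := N) (s := s) (by omega)
      have hvs : 0 < v N (s+1) := v_pos hN (by omega)
      have hNpos : (0:ℝ) < N := by exact_mod_cast hN
      constructor
      · nlinarith [Nat.cast_nonneg (α := ℝ) s]
      · omega
    | (m+2) =>
      intro s h
      have e := leib (N := N) m s h
      have h1 : 0 ≤ D N (m+1) (s+1) := (ih (m+1) (by omega) (s+1) (by omega)).1
      have h2 : 0 < D N m (s+2) := by
        match m with
        | 0 => exact v_pos hN (by omega)
        | 1 =>
          have e1 := keyD1 (N := N) (s := s+2) (by omega)
          rw [show s+2+1 = s+3 from rfl] at e1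
          push_cast at e1
          have hv : 0 < v N (s+3) := v_pos hN (by omega)
          have hNpos : (0:ℝ) < N := by exact_mod_cast hN
          have hs2 : (0:ℝ) < ((s:ℝ)+2) := by positivity
          nlinarith
        | (m'+2) => exact (ih (m'+2) (by omega) (s+2) (by omega)).2 (by omega)
      have hNpos : (0:ℝ) < N := by exact_mod_cast hN
      have hs0 : (0:ℝ) ≤ (s:ℝ) := Nat.cast_nonneg s
      have hmain : 0 < D N (m+2) s := by
        have : (0:ℝ) < (N : ℝ) * D N (m+2) s := by
          rw [e]; push_cast
          nlinarith
        nlinarith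
      exact ⟨hmain.le, fun _ => hmain⟩

lemma expand {N : ℕ} : ∀ k s : ℕ,
    (-1 : ℝ) ^ k * D N k s =
      ∑ j ∈ Finset.range (k+1), (-1 : ℝ) ^ j * (k.choose j : ℝ) * v N (s + j) := by
  intro k
  induction k with
  | zero => intro s; simp [D]
  | succ k ih =>
    intro s
    have h1 := ih (s+1)
    have h2 := ih s
    have hT : ∑ j ∈ Finset.range (k+2), (-1 : ℝ) ^ j * ((k+1).choose j : ℝ) * v N (s + j)
        = v N s - ∑ j ∈ Finset.range (k+1),
            (-1 : ℝ) ^ j * ((k.choose j : ℝ) + (k.choose (j+1) : ℝ)) * v N (s + 1 + j) := by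
      rw [Finset.sum_range_succ' (fun j => (-1 : ℝ) ^ j * ((k+1).choose j : ℝ) * v N (s + j))]
      have e : ∀ x ∈ Finset.range (k+1),
          (-1 : ℝ) ^ (x+1) * (((k+1).choose (x+1) : ℝ)) * v N (s + (x+1))
          = -((-1 : ℝ) ^ x * ((k.choose x : ℝ) + (k.choose (x+1) : ℝ)) * v N (s + 1 + x)) := by
        intro x _
        rw [Nat.choose_succ_succ, show s + (x+1) = s + 1 + x from by omega]
        push_cast
        ring
      rw [Finset.sum_congr rfl e, Finset.sum_neg_distrib]
      simp
      ring
    have hS : ∑ j ∈ Finset.range k, (-1 : ℝ) ^ j * (k.choose (j+1) : ℝ) * v N (s + 1 + j)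
        = v N s - ∑ j ∈ Finset.range (k+1), (-1 : ℝ) ^ j * (k.choose j : ℝ) * v N (s + j) := by
      rw [Finset.sum_range_succ' (fun j => (-1 : ℝ) ^ j * (k.choose j : ℝ) * v N (s + j))]
      have e : ∀ x ∈ Finset.range k,
          (-1 : ℝ) ^ (x+1) * ((k.choose (x+1) : ℝ)) * v N (s + (x+1))
          = -((-1 : ℝ) ^ x * (k.choose (x+1) : ℝ) * v N (s + 1 + x)) := by
        intro x _
        rw [show s + (x+1) = s + 1 + x from by omega]
        ring
      rw [Finset.sum_congr rfl e, Finset.sum_neg_distrib]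
      simp
    have hz : ((-1 : ℝ)) ^ k * (k.choose (k+1) : ℝ) * v N (s + 1 + k) = 0 := by
      simp [Nat.choose_succ_self]
    have hsplit : ∑ j ∈ Finset.range (k+1),
        (-1 : ℝ) ^ j * ((k.choose j : ℝ) + (k.choose (j+1) : ℝ)) * v N (s + 1 + j)
        = (∑ j ∈ Finset.range (k+1), (-1 : ℝ) ^ j * (k.choose j : ℝ) * v N (s + 1 + j))
          + (∑ j ∈ Finset.range k, (-1 : ℝ) ^ j * (k.choose (j+1) : ℝ) * v N (s + 1 + j)) := by
      have hgk : ∑ j ∈ Finset.range k, (-1 : ℝ) ^ j * (k.choose (j+1) : ℝ) * v N (s + 1 + j)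
          = ∑ j ∈ Finset.range (k+1), (-1 : ℝ) ^ j * (k.choose (j+1) : ℝ) * v N (s + 1 + j) := by
        rw [Finset.sum_range_succ, hz, add_zero]
      rw [hgk, ← Finset.sum_add_distrib]
      apply Finset.sum_congr rfl
      intro j _; ring
    simp only [D]
    rw [hT, hsplit, hS]
    have h1' : ∑ j ∈ Finset.range (k+1), (-1:ℝ)^j * (k.choose j : ℝ) * v N (s + 1 + j)
        = (-1:ℝ)^k * D N k (s+1) := h1.symm
    rw [h1', ← h2]
    ring

lemma aSeq_eq {k N : ℕ} (hN : 1 ≤ N) :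
    (-1 : ℝ) ^ k * ((N : ℝ) ^ k * aSeq k N)
      = ∑ l ∈ Finset.range (k+1), (-1 : ℝ) ^ l * (k.choose l : ℝ) * v N l := by
  unfold aSeq
  rw [Finset.mul_sum, Finset.mul_sum]
  apply Finset.sum_congr rfl
  intro l hl
  have hlk : l ≤ k := by
    simp only [Finset.mem_range] at hl; omega
  obtain ⟨m, hm⟩ := Nat.le.dest hlk
  have hkl : k - l = m := by omega
  have hNne : (N : ℝ) ≠ 0 := by
    have : (0:ℝ) < N := by exact_mod_cast hN
    linarith
  have hNm : (N : ℝ) ^ m ≠ 0 := pow_ne_zero _ hNne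
  rw [hkl, ← hm, v, show ((-(N:ℝ)) ^ m) = (-1 : ℝ) ^ m * (N : ℝ) ^ m from neg_pow _ _, mul_inv]
  have hinv : ((-1 : ℝ) ^ m)⁻¹ = (-1 : ℝ) ^ m := by
    rw [← inv_pow]; norm_num
  rw [hinv, pow_add, pow_add]
  field_simp
  have hone : (-1:ℝ) ^ m * (-1:ℝ) ^ m = 1 := by
    rw [← pow_add]; exact Even.neg_one_pow ⟨m, rfl⟩
  rw [sq, hone, one_mul]

lemma aSeq_D {k N : ℕ} (hN : 1 ≤ N) : (N : ℝ) ^ k * aSeq k N = D N k 0 := by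
  have h := expand (N := N) k 0
  simp only [zero_add] at h
  have h2 := aSeq_eq (k := k) (N := N) hN
  have hc : ((-1 : ℝ) ^ k) ≠ 0 := by
    apply pow_ne_zero; norm_num
  apply mul_left_cancel₀ hc
  rw [h2, h]

/-- first values and positivity of `a_k(N)`. -/
theorem stmt7 (N : ℕ) (hN : 1 ≤ N) :
    aSeq 0 N = 1 ∧ aSeq 1 N = 0 ∧ ∀ k : ℕ, 2 ≤ k → k ≤ N → 0 < aSeq k N := by
  have hNpos : (0:ℝ) < N := by exact_mod_cast hN
  refine ⟨?_, ?_, ?_⟩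
  · have := aSeq_D (k := 0) (N := N) hN
    simpa [D, v] using this
  · have h := aSeq_D (k := 1) (N := N) hN
    have hD : D N 1 0 = 0 := by
      simp only [D, v]
      rw [Nat.descFactorial_succ]
      simp
      rw [div_self (by linarith : (N:ℝ) ≠ 0)]
      ring
    rw [hD] at h
    simp only [pow_one] at h
    have hne : (N:ℝ) ≠ 0 := by linarith
    exact (mul_eq_zero.mp h).resolve_left hne
  · intro k hk2 hkN
    have hD := (Dpos hN k 0 (by omega)).2 hk2
    have h := aSeq_D (k := k) (N := N) hN
    have hNk : (0:ℝ) < (N:ℝ) ^ k := by positivity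
    nlinarith


end WgPerm

end
end

section
/- For every integer k ≥ 1, every integer N ≥ k, and all σ,τ ∈ P(k), one has (−1)^{#σ+#τ}·W̊g_k(σ,τ,N) ≥ 0; that is, the sign of the centered Weingarten function W̊g_k(σ,τ,N) is (−1)^{#σ+#τ}. -/
open Finset Function

noncomputable section

namespace WgPerm


/-- backward difference operator -/
def dd (f : ℤ → ℝ) : ℤ → ℝ := fun n => f n - f (n - 1)

/-- all iterated differences nonnegative from `c` on -/
def AD (c : ℤ) (f : ℤ → ℝ) : Prop := ∀ (j : ℕ) (n : ℤ), c + j ≤ n → 0 ≤ dd^[j] f n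

lemma dd_iter_add (f g : ℤ → ℝ) : ∀ j, dd^[j] (fun n => f n + g n) = fun n => dd^[j] f n + dd^[j] g n := by
  intro j
  induction j with
  | zero => simp
  | succ j ih =>
    funext n
    simp only [iterate_succ_apply', ih, dd]
    ring

lemma dd_iter_smul (a : ℝ) (f : ℤ → ℝ) : ∀ j, dd^[j] (fun n => a * f n) = fun n => a * dd^[j] f n := by
  intro j
  induction j with
  | zero => simp
  | succ j ih =>
    funext n
    simp only [iterate_succ_apply', ih, dd]
    ring

lemma dd_iter_shift (f : ℤ → ℝ) : ∀ j, dd^[j] (fun n => f (n - 1)) = fun n => dd^[j] f (n - 1) := by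
  intro j
  induction j with
  | zero => simp
  | succ j ih =>
    funext n
    simp only [iterate_succ_apply', ih, dd]

lemma dd_iter_const (a : ℝ) : ∀ j, dd^[j] (fun _ => a) = fun n => if j = 0 then a else 0 := by
  intro j
  induction j with
  | zero => simp
  | succ j ih =>
    funext n
    simp only [iterate_succ_apply', ih, dd]
    cases j <;> simp

lemma dd_iter_linear (f : ℤ → ℝ) : ∀ (j : ℕ) (n : ℤ),
    dd^[j] (fun n => ((n : ℝ) - 1) * f n) n
      = ((n : ℝ) - 1) * dd^[j] f n + (j : ℝ) * dd^[j - 1] f (n - 1) := by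
  intro j
  induction j with
  | zero => intro n; simp
  | succ j ih =>
    intro n
    rw [iterate_succ_apply' dd j]
    have h1 : dd (dd^[j] (fun n => ((n : ℝ) - 1) * f n)) n
        = dd^[j] (fun n => ((n : ℝ) - 1) * f n) n - dd^[j] (fun n => ((n : ℝ) - 1) * f n) (n - 1) := rfl
    rw [h1, ih n, ih (n - 1)]
    have h2 : (j : ℝ) * dd^[j - 1] f (n - 1) - (j : ℝ) * dd^[j - 1] f (n - 1 - 1)
        = (j : ℝ) * dd^[j] f (n - 1) := by
      cases j with
      | zero => simp
      | succ j =>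
        have : dd^[j + 1] f (n - 1) = dd^[j] f (n-1) - dd^[j] f (n - 1 - 1) := by
          rw [iterate_succ_apply' dd j]; rfl
        simp only [Nat.add_sub_cancel, this]
        ring
    have h3 : dd^[j+1] f n = dd^[j] f n - dd^[j] f (n - 1) := by
      rw [iterate_succ_apply' dd j]; rfl
    have h4 : dd^[j+1] f (n-1) = dd^[j] f (n-1) - dd^[j] f (n - 1 - 1) := by
      rw [iterate_succ_apply' dd j]; rfl
    push_cast
    linear_combination (1 - (n:ℝ)) * h3 + h2


lemma AD_add {c : ℤ} {f g : ℤ → ℝ} (hf : AD c f) (hg : AD c g) :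
    AD c (fun n => f n + g n) := by
  intro j n hn
  rw [dd_iter_add]
  exact add_nonneg (hf j n hn) (hg j n hn)

lemma AD_smul {c : ℤ} {a : ℝ} (ha : 0 ≤ a) {f : ℤ → ℝ} (hf : AD c f) :
    AD c (fun n => a * f n) := by
  intro j n hn
  rw [dd_iter_smul]
  exact mul_nonneg ha (hf j n hn)

lemma AD_dd {c : ℤ} {f : ℤ → ℝ} (hf : AD c f) : AD (c + 1) (dd f) := by
  intro j n hn
  rw [← iterate_succ_apply]
  exact hf (j + 1) n (by push_cast; omega)

lemma AD_shift {c : ℤ} {f : ℤ → ℝ} (hf : AD c f) : AD (c + 1) (fun n => f (n - 1)) := by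
  intro j n hn
  rw [dd_iter_shift]
  exact hf j (n - 1) (by omega)

lemma AD_linear {c : ℤ} (hc : 1 ≤ c) {f : ℤ → ℝ} (hf : AD c f) :
    AD c (fun n => ((n : ℝ) - 1) * f n) := by
  intro j n hn
  rw [dd_iter_linear]
  have h1 : (0:ℝ) ≤ (n : ℝ) - 1 := by
    have h : (1:ℤ) ≤ n := by omega
    have : ((1:ℤ):ℝ) ≤ (n:ℝ) := Int.cast_le.2 h
    push_cast at this; linarith
  refine add_nonneg (mul_nonneg h1 (hf j n hn)) ?_
  cases j with
  | zero => simp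
  | succ j =>
    refine mul_nonneg (by positivity) ?_
    simpa using hf j (n - 1) (by push_cast; omega)

/-- the polynomial sequence `P_m` -/
def P (N : ℝ) : ℕ → ℤ → ℝ
  | 0 => fun _ => 1
  | (m+1) => fun n => N * (P N m n - P N m (n-1)) + ((n:ℝ) - 1) * P N m (n-1)

lemma AD_P {N : ℝ} (hN : 0 ≤ N) (m : ℕ) : AD m (P N m) := by
  induction m with
  | zero =>
    intro j n hn
    rw [show P N 0 = fun _ => (1:ℝ) from rfl, dd_iter_const]
    split <;> norm_num
  | succ m ih =>
    have h1 : P N (m+1) = fun n => N * dd (P N m) n + ((n:ℝ) - 1) * (fun x => P N m (x - 1)) n := by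
      funext n; simp only [P, dd]
    rw [h1]
    have h2 : ((m:ℤ) + 1) = ((m+1 : ℕ) : ℤ) := by push_cast; ring
    have := AD_add (AD_smul hN (AD_dd ih)) (AD_linear (by omega) (AD_shift ih))
    rwa [h2] at this

lemma P_nonneg {N : ℝ} (hN : 0 ≤ N) (m : ℕ) (n : ℤ) (h : (m:ℤ) ≤ n) : 0 ≤ P N m n := by
  have := AD_P hN m 0 n (by omega)
  simpa using this


/-- the inner alternating sum -/
def Sfun (N n d : ℕ) : ℝ :=
  ∑ i ∈ Finset.range (d+1),
    (d.choose i : ℝ) * (-1 : ℝ)^i * (((N:ℝ)^i)⁻¹ / (Nat.descFactorial N (n - i) : ℝ))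

lemma Sfun_succ (N n d : ℕ) (hN : 0 < N) :
    Sfun N n (d+1) = Sfun N n d - Sfun N (n-1) d / N := by
  have hN' : ((N:ℝ)) ≠ 0 := by positivity
  set f : ℕ → ℝ := fun i =>
    (d.choose i : ℝ) * (-1 : ℝ)^i * (((N:ℝ)^i)⁻¹ / (Nat.descFactorial N (n - i) : ℝ)) with hf
  have key : Sfun N n (d+1)
      = ∑ j ∈ Finset.range (d+1), (f (j+1)
        + (d.choose j : ℝ) * (-1 : ℝ)^(j+1) * (((N:ℝ)^(j+1))⁻¹ / (Nat.descFactorial N (n - (j+1)) : ℝ)))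
        + f 0 := by
    rw [Sfun, Finset.sum_range_succ']
    congr 1
    · refine Finset.sum_congr rfl ?_
      intro j hj
      rw [Nat.choose_succ_succ]
      push_cast
      rw [hf]
      ring
    · simp [hf]
  rw [key, Finset.sum_add_distrib]
  have h1 : ∑ j ∈ Finset.range (d+1), f (j+1) = Sfun N n d - f 0 := by
    have h2 : ∑ i ∈ Finset.range (d+2), f i = ∑ j ∈ Finset.range (d+1), f (j+1) + f 0 :=
      Finset.sum_range_succ' f (d+1)
    have h3 : ∑ i ∈ Finset.range (d+2), f i = Sfun N n d := by
      rw [Finset.sum_range_succ]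
      have : f (d+1) = 0 := by simp [hf, Nat.choose_succ_self]
      rw [this, add_zero]; rfl
    linarith [h2, h3]
  rw [h1]
  have h4 : ∑ j ∈ Finset.range (d+1),
      (d.choose j : ℝ) * (-1 : ℝ)^(j+1) * (((N:ℝ)^(j+1))⁻¹ / (Nat.descFactorial N (n - (j+1)) : ℝ))
      = - (Sfun N (n-1) d / N) := by
    rw [Sfun, Finset.sum_div, ← Finset.sum_neg_distrib]
    refine Finset.sum_congr rfl fun j hj => ?_
    have hd : n - (j+1) = n - 1 - j := by omega
    rw [hd]
    rw [show ((N:ℝ)^(j+1))⁻¹ = ((N:ℝ)^j)⁻¹ * ((N:ℝ))⁻¹ by rw [pow_succ, mul_inv]]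
    ring
  rw [h4]
  ring

lemma Sfun_eq (N : ℕ) : ∀ (d n : ℕ), d ≤ n → n ≤ N →
    Sfun N n d * ((N:ℝ)^d * (Nat.descFactorial N n : ℝ)) = P (N:ℝ) d (n : ℤ) := by
  intro d
  induction d with
  | zero =>
    intro n _ hn
    have hpos : 0 < Nat.descFactorial N n := Nat.pos_of_ne_zero (fun hz => absurd (Nat.descFactorial_eq_zero_iff_lt.1 hz) (not_lt.2 hn))
    have : (Nat.descFactorial N n : ℝ) ≠ 0 := by positivity
    simp [Sfun, P]
    field_simp
  | succ d ih =>
    intro n hd hn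
    have hn1 : 1 ≤ n := le_trans (Nat.succ_le_succ (Nat.zero_le d)) hd
    have hNpos : 0 < N := lt_of_lt_of_le hn1 hn
    have hNne : ((N:ℝ)) ≠ 0 := by positivity
    have hd1 : d ≤ n - 1 := by omega
    have hn1' : n - 1 ≤ N := by omega
    have e1 := ih n (le_trans (Nat.le_succ d) hd) hn
    have e2 := ih (n-1) hd1 hn1'
    have hdesc : (Nat.descFactorial N n : ℝ)
        = ((N - (n-1) : ℕ) : ℝ) * (Nat.descFactorial N (n-1) : ℝ) := by
      have h : n = (n-1) + 1 := by omega
      rw [h, Nat.descFactorial_succ]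
      push_cast
      ring
    have hcast : ((N - (n-1) : ℕ) : ℝ) = (N:ℝ) - ((n:ℝ) - 1) := by
      rw [Nat.cast_sub hn1', Nat.cast_sub hn1]
      push_cast; ring
    have hdesc2 : (Nat.descFactorial N n : ℝ)
        = ((N:ℝ) - (n:ℝ) + 1) * (Nat.descFactorial N (n-1) : ℝ) := by
      rw [hdesc, hcast]; ring
    have hz : ((n-1:ℕ):ℤ) = (n:ℤ) - 1 := by omega
    rw [hz] at e2
    have expand : (Sfun N n d - Sfun N (n-1) d / N) * ((N:ℝ)^(d+1) * (Nat.descFactorial N n : ℝ))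
        = (N:ℝ) * (Sfun N n d * ((N:ℝ)^d * (Nat.descFactorial N n : ℝ)))
          - ((N:ℝ) - (n:ℝ) + 1) * (Sfun N (n-1) d * ((N:ℝ)^d * (Nat.descFactorial N (n-1) : ℝ))) := by
      rw [hdesc2]; field_simp; ring
    rw [Sfun_succ N n d hNpos, expand, e1, e2]
    simp only [P, Int.cast_natCast, Int.cast_sub, Int.cast_one]
    ring

lemma Sfun_nonneg {N n d : ℕ} (hd : d ≤ n) (hn : n ≤ N) (hn1 : 1 ≤ n) : 0 ≤ Sfun N n d := by
  have hNpos : 0 < N := lt_of_lt_of_le hn1 hn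
  have hP : 0 ≤ P (N:ℝ) d (n:ℤ) := P_nonneg (by positivity) d _ (by exact_mod_cast hd)
  have heq := Sfun_eq N d n hd hn
  have hpos : (0:ℝ) < (N:ℝ)^d * (Nat.descFactorial N n : ℝ) := by
    have := Nat.pos_of_ne_zero (fun hz => absurd (Nat.descFactorial_eq_zero_iff_lt.1 hz) (not_lt.2 hn))
    positivity
  nlinarith [heq, hP, hpos, mul_pos hpos hpos]


instance instFiniteSetoid {α : Type*} [Finite α] : Finite (Setoid α) :=
  Finite.of_injective (fun s : Setoid α => s.r) fun s t h => by
    cases s; cases t; simp only at h; subst h; rfl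

variable {k : ℕ}

lemma lam_pos {π σ : Setoid (Fin k)} (h : π ≤ σ) (B : Quotient σ) : 0 < lam π σ B := by
  rw [lam]
  have hne : Nonempty {c : Quotient π // Quotient.mk σ (Quotient.out c) = B} := by
    obtain ⟨b, rfl⟩ := Quotient.exists_rep B
    refine ⟨⟨Quotient.mk π b, ?_⟩⟩
    have h1 : π.r (Quotient.out (Quotient.mk π b)) b := by
      have := Quotient.out_eq (Quotient.mk π b)
      exact Quotient.eq.1 this
    exact Quotient.sound (h h1)
  exact Nat.card_pos

lemma sum_lam (π σ : Setoid (Fin k)) [Fintype (Quotient π)] [Fintype (Quotient σ)] :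
    ∑ B : Quotient σ, lam π σ B = numBlocks π := by
  classical
  have h1 : ∀ B : Quotient σ, lam π σ B
      = (Finset.univ.filter (fun c : Quotient π => Quotient.mk σ (Quotient.out c) = B)).card := by
    intro B
    rw [lam, Nat.card_eq_fintype_card, Fintype.card_subtype]
  rw [Finset.sum_congr rfl (fun B _ => h1 B)]
  rw [← Finset.card_eq_sum_card_fiberwise (fun c _ => Finset.mem_univ _)]
  rw [numBlocks, Nat.card_eq_fintype_card, Finset.card_univ]

lemma mobius_sign {π σ : Setoid (Fin k)} (h : π ≤ σ) :
    0 ≤ (-1 : ℤ) ^ (numBlocks π + numBlocks σ) * mobius π σ := by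
  classical
  letI : Fintype (Quotient π) := Fintype.ofFinite _
  letI : Fintype (Quotient σ) := Fintype.ofFinite _
  rw [mobius, finprod_eq_prod_of_fintype, Finset.prod_mul_distrib,
    Finset.prod_pow_eq_pow_sum]
  set e := ∑ B : Quotient σ, (lam π σ B - 1) with he
  have hsum : e + numBlocks σ = numBlocks π := by
    rw [he, ← sum_lam π σ]
    have : numBlocks σ = ∑ _B : Quotient σ, 1 := by
      simp [numBlocks, Nat.card_eq_fintype_card, Finset.card_univ]
    rw [this, ← Finset.sum_add_distrib]
    exact Finset.sum_congr rfl fun B _ => Nat.sub_add_cancel (lam_pos h B)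
  have hpow : (-1 : ℤ) ^ (numBlocks π + numBlocks σ) * (-1 : ℤ) ^ e = 1 := by
    rw [← pow_add]
    exact Even.neg_one_pow ⟨numBlocks σ + e, by omega⟩
  rw [← mul_assoc, hpow, one_mul]
  exact Finset.prod_nonneg fun B _ => by positivity

lemma numBlocks_le_card (π : Setoid (Fin k)) : numBlocks π ≤ k := by
  have := Nat.card_le_card_of_surjective (Quotient.mk π)
    (fun q => ⟨q.out, Quotient.out_eq q⟩)
  simpa [numBlocks] using this

lemma one_le_numBlocks (hk : 1 ≤ k) (π : Setoid (Fin k)) : 1 ≤ numBlocks π := by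
  have : Nonempty (Quotient π) := ⟨Quotient.mk π ⟨0, hk⟩⟩
  exact Nat.card_pos

lemma numSingletons_le {π ρ : Setoid (Fin k)} (h : π ≤ ρ) :
    numSingletons ρ ≤ numBlocks π := by
  refine Nat.card_le_card_of_injective
    (fun j : {j : Fin k | ∀ m, ρ.r j m → m = j} => Quotient.mk π j.val) ?_
  intro a b hab
  have h1 : π.r a.val b.val := Quotient.eq.1 hab
  have h2 : ρ.r a.val b.val := h h1
  exact Subtype.ext ((a.prop b.val h2).symm)

/-- the sign of the centered Weingarten function is `(−1)^{#σ+#τ}`. -/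
theorem stmt11 (k N : ℕ) (hk : 1 ≤ k) (hN : k ≤ N) (σ τ : Setoid (Fin k)) :
    0 ≤ (-1 : ℝ) ^ (numBlocks σ + numBlocks τ) * cWg k N σ τ := by
  classical
  have hfin : ({π : Setoid (Fin k) | π ≤ σ ⊓ τ}).Finite := Set.toFinite _
  set d := numSingletons (σ ⊔ τ) with hd
  have h1 : ∀ i : ℕ,
      (∑ᶠ π ∈ {π : Setoid (Fin k) | π ≤ σ ⊓ τ},
        ((mobius π σ * mobius π τ : ℤ) : ℝ) * ((N : ℝ) ^ i)⁻¹
          / (Nat.descFactorial N (numBlocks π - i) : ℝ))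
      = ∑ π ∈ hfin.toFinset, ((mobius π σ * mobius π τ : ℤ) : ℝ) * ((N : ℝ) ^ i)⁻¹
          / (Nat.descFactorial N (numBlocks π - i) : ℝ) :=
    fun i => finsum_mem_eq_finite_toFinset_sum _ hfin
  have hrw : cWg k N σ τ = ∑ π ∈ hfin.toFinset,
      ((mobius π σ * mobius π τ : ℤ) : ℝ) * Sfun N (numBlocks π) d := by
    rw [cWg]
    simp only [← hd, h1, Finset.mul_sum]
    rw [Finset.sum_comm]
    refine Finset.sum_congr rfl fun π _ => ?_
    rw [Sfun, Finset.mul_sum]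
    refine Finset.sum_congr rfl fun i _ => ?_
    ring
  rw [hrw, Finset.mul_sum]
  refine Finset.sum_nonneg fun π hπ => ?_
  rw [Set.Finite.mem_toFinset] at hπ
  have hπσ : π ≤ σ := le_trans hπ inf_le_left
  have hπτ : π ≤ τ := le_trans hπ inf_le_right
  have s1 := mobius_sign hπσ
  have s2 := mobius_sign hπτ
  have hz : 0 ≤ ((-1 : ℤ) ^ (numBlocks σ + numBlocks τ)) * (mobius π σ * mobius π τ) := by
    have hmul := mul_nonneg s1 s2
    have hpow : ((-1 : ℤ) ^ (numBlocks π + numBlocks σ)) * ((-1 : ℤ) ^ (numBlocks π + numBlocks τ))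
        = (-1 : ℤ) ^ (numBlocks σ + numBlocks τ) := by
      rw [← pow_add]
      have h2 : numBlocks π + numBlocks σ + (numBlocks π + numBlocks τ)
          = 2 * numBlocks π + (numBlocks σ + numBlocks τ) := by ring
      rw [h2, pow_add, pow_mul]
      norm_num
    have h3 : ((-1 : ℤ) ^ (numBlocks π + numBlocks σ) * mobius π σ)
        * ((-1 : ℤ) ^ (numBlocks π + numBlocks τ) * mobius π τ)
        = ((-1 : ℤ) ^ (numBlocks σ + numBlocks τ)) * (mobius π σ * mobius π τ) := by
      rw [← hpow]; ring
    rwa [h3] at hmul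
  have hzR : 0 ≤ ((-1 : ℝ) ^ (numBlocks σ + numBlocks τ)) * ((mobius π σ * mobius π τ : ℤ) : ℝ) := by
    exact_mod_cast hz
  have hb1 : 1 ≤ numBlocks π := one_le_numBlocks hk π
  have hbN : numBlocks π ≤ N := le_trans (numBlocks_le_card π) hN
  have hdb : d ≤ numBlocks π := numSingletons_le (le_trans hπσ le_sup_left)
  have hS : 0 ≤ Sfun N (numBlocks π) d := Sfun_nonneg hdb hbN hb1
  rw [← mul_assoc]
  exact mul_nonneg hzR hS


end WgPerm

end
end

section
/- For all integers d, p, N with 0 ≤ d ≤ p ≤ N, one has Σ_{i=0}^{p−d} binom(p−d,i)·N^{−i}·a_{p−i}(N) = Σ_{i=0}^{d} binom(d,i)·((N−p+i)!/N!)·(−N)^{−i}. -/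
open Finset

noncomputable section

namespace WgPerm

lemma descFac_inv_cast {p N : ℕ} (h : p ≤ N) :
    ((Nat.descFactorial N p : ℝ))⁻¹ =
      (Nat.factorial (N - p) : ℝ) / (Nat.factorial N : ℝ) := by
  have h1 : ((N - p).factorial : ℝ) * (Nat.descFactorial N p : ℝ) = (N.factorial : ℝ) := by
    exact_mod_cast congrArg (Nat.cast : ℕ → ℝ) (Nat.factorial_mul_descFactorial h)
  have h2 : (Nat.descFactorial N p : ℝ) ≠ 0 := by
    exact_mod_cast (Nat.pos_of_ne_zero (fun hz => absurd (Nat.descFactorial_eq_zero_iff_lt.mp hz) (by omega))).ne'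
  have h3 : (N.factorial : ℝ) ≠ 0 := by exact_mod_cast N.factorial_pos.ne'
  field_simp
  linarith [h1]

lemma choose_trinom {p i l : ℕ} (hi : i ≤ p) (hl : l ≤ p) :
    p.choose i * (p - i).choose l = p.choose l * (p - l).choose i := by
  rcases le_or_gt (i + l) p with h | h
  · have := Nat.choose_mul (n := p) (show l ≤ p - i by omega)
    rw [Nat.choose_symm hi] at this
    rw [this]
    congr 1
    rw [show p - i - l = (p - l) - i by omega]
    exact Nat.choose_symm (by omega)
  · have e1 : (p - i).choose l = 0 := Nat.choose_eq_zero_of_lt (by omega)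
    have e2 : (p - l).choose i = 0 := Nat.choose_eq_zero_of_lt (by omega)
    simp [e1, e2]

lemma pascal_sum (f : ℕ → ℝ) (m : ℕ) :
    ∑ i ∈ range (m + 2), ((m + 1).choose i : ℝ) * f i
      = ∑ i ∈ range (m + 1), (m.choose i : ℝ) * f i
        + ∑ i ∈ range (m + 1), (m.choose i : ℝ) * f (i + 1) := by
  rw [Finset.sum_range_succ' (fun i => ((m + 1).choose i : ℝ) * f i) (m + 1)]
  have : ∀ i, (((m + 1).choose (i + 1) : ℕ) : ℝ) = (m.choose i : ℝ) + (m.choose (i+1) : ℝ) := by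
    intro i; rw [Nat.choose_succ_succ]; push_cast; ring
  simp only [this, add_mul]
  rw [Finset.sum_add_distrib]
  have e1 : ∑ i ∈ range (m + 1), (m.choose (i + 1) : ℝ) * f (i + 1)
      = ∑ i ∈ range (m + 2), (m.choose i : ℝ) * f i - (m.choose 0 : ℝ) * f 0 := by
    rw [Finset.sum_range_succ' (fun i => (m.choose i : ℝ) * f i) (m + 1)]
    ring
  rw [e1]
  rw [Finset.sum_range_succ (fun i => (m.choose i : ℝ) * f i) (m + 1)]
  simp [Nat.choose_succ_self]
  ring

lemma base (p N : ℕ) (hpN : p ≤ N) :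
    ∑ i ∈ range (p + 1), (p.choose i : ℝ) * ((N : ℝ) ^ i)⁻¹ * aSeq (p - i) N
      = (Nat.factorial (N - p) : ℝ) / (Nat.factorial N : ℝ) := by
  have key : ∀ i ∈ range (p + 1),
      (p.choose i : ℝ) * ((N : ℝ) ^ i)⁻¹ * aSeq (p - i) N
        = ∑ l ∈ range (p + 1), (p.choose l : ℝ) * ((Nat.descFactorial N l : ℝ))⁻¹ *
            (((p - l).choose i : ℝ) * ((N : ℝ)⁻¹) ^ i * (-(N : ℝ)⁻¹) ^ (p - l - i)) := by
    intro i hi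
    have hi' : i ≤ p := by simpa using Nat.lt_succ_iff.mp (mem_range.mp hi)
    rw [aSeq, Finset.mul_sum]
    rw [Finset.sum_subset (Finset.range_subset_range.mpr (by omega : p - i + 1 ≤ p + 1))]
    · apply Finset.sum_congr rfl
      intro l hl
      have hl' : l ≤ p := by simpa using Nat.lt_succ_iff.mp (mem_range.mp hl)
      have hc : ((p.choose i : ℕ) : ℝ) * ((p - i).choose l : ℝ)
          = ((p.choose l : ℕ) : ℝ) * ((p - l).choose i : ℝ) := by
        exact_mod_cast congrArg (Nat.cast : ℕ → ℝ) (choose_trinom hi' hl')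
      rw [show p - i - l = p - l - i by omega]
      rw [div_eq_mul_inv, ← inv_pow, ← inv_pow, inv_neg]
      linear_combination (((N : ℝ)⁻¹) ^ i * (-(N : ℝ)⁻¹) ^ (p - l - i) *
        ((Nat.descFactorial N l : ℝ))⁻¹) * hc
    · intro l hl hnl
      have : (p - i).choose l = 0 := by
        apply Nat.choose_eq_zero_of_lt
        simp only [mem_range] at hl hnl
        omega
      simp [this]
  rw [Finset.sum_congr rfl key, Finset.sum_comm]
  have inner : ∀ l ∈ range (p + 1),
      ∑ i ∈ range (p + 1), (p.choose l : ℝ) * ((Nat.descFactorial N l : ℝ))⁻¹ *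
          (((p - l).choose i : ℝ) * ((N : ℝ)⁻¹) ^ i * (-(N : ℝ)⁻¹) ^ (p - l - i))
        = (p.choose l : ℝ) * ((Nat.descFactorial N l : ℝ))⁻¹ * (0 : ℝ) ^ (p - l) := by
    intro l hl
    rw [← Finset.mul_sum]
    congr 1
    rw [← Finset.sum_subset (Finset.range_subset_range.mpr (by omega : p - l + 1 ≤ p + 1))]
    · have := add_pow ((N : ℝ)⁻¹) (-(N : ℝ)⁻¹) (p - l)
      rw [add_neg_cancel] at this
      rw [this]
      apply Finset.sum_congr rfl
      intro i hi
      ring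
    · intro i hi hni
      have : (p - l).choose i = 0 := by
        apply Nat.choose_eq_zero_of_lt
        simp only [mem_range] at hi hni
        omega
      simp [this]
  rw [Finset.sum_congr rfl inner]
  rw [Finset.sum_eq_single p]
  · simp [descFac_inv_cast hpN]
  · intro l hl hlp
    have : (0:ℝ) ^ (p - l) = 0 := by
      apply zero_pow
      simp only [mem_range] at hl
      omega
    simp [this]
  · intro h
    exact absurd (self_mem_range_succ p) h

lemma recL (d p N : ℕ) (h : d + 1 ≤ p) :
    ∑ i ∈ Finset.range (p - (d + 1) + 1),
        ((p - (d + 1)).choose i : ℝ) * ((N : ℝ) ^ i)⁻¹ * aSeq (p - i) N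
      = (∑ i ∈ Finset.range (p - d + 1),
          ((p - d).choose i : ℝ) * ((N : ℝ) ^ i)⁻¹ * aSeq (p - i) N)
        - (N : ℝ)⁻¹ * ∑ i ∈ Finset.range (p - 1 - d + 1),
            ((p - 1 - d).choose i : ℝ) * ((N : ℝ) ^ i)⁻¹ * aSeq (p - 1 - i) N := by
  obtain ⟨m, hm⟩ : ∃ m, p - d = m + 1 := ⟨p - d - 1, by omega⟩
  have h1 : p - (d + 1) = m := by omega
  have h2 : p - 1 - d = m := by omega
  rw [h1, h2, hm, eq_sub_iff_add_eq]
  have hP := pascal_sum (fun i => ((N : ℝ) ^ i)⁻¹ * aSeq (p - i) N) m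
  simp only [mul_assoc] at hP ⊢
  rw [show m + 1 + 1 = m + 2 from rfl, hP]
  congr 1
  rw [Finset.mul_sum]
  apply Finset.sum_congr rfl
  intro i hi
  rw [show p - (i + 1) = p - 1 - i by omega, pow_succ, mul_inv]
  ring

lemma recR (d p N : ℕ) (h1 : 1 ≤ p) (hpN : p ≤ N) :
    ∑ i ∈ Finset.range (d + 1 + 1),
        ((d + 1).choose i : ℝ) * ((Nat.factorial (N - p + i) : ℝ) / (Nat.factorial N : ℝ)) *
          ((-(N : ℝ)) ^ i)⁻¹
      = (∑ i ∈ Finset.range (d + 1),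
          (d.choose i : ℝ) * ((Nat.factorial (N - p + i) : ℝ) / (Nat.factorial N : ℝ)) *
            ((-(N : ℝ)) ^ i)⁻¹)
        - (N : ℝ)⁻¹ * ∑ i ∈ Finset.range (d + 1),
            (d.choose i : ℝ) * ((Nat.factorial (N - (p - 1) + i) : ℝ) / (Nat.factorial N : ℝ)) *
              ((-(N : ℝ)) ^ i)⁻¹ := by
  rw [eq_sub_iff_add_eq]
  have hP := pascal_sum
    (fun i => ((Nat.factorial (N - p + i) : ℝ) / (Nat.factorial N : ℝ)) * ((-(N : ℝ)) ^ i)⁻¹) d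
  simp only [mul_assoc] at hP ⊢
  rw [show d + 1 + 1 = d + 2 from rfl, hP, add_assoc, add_eq_left, Finset.mul_sum,
    ← Finset.sum_add_distrib]
  apply Finset.sum_eq_zero
  intro i hi
  rw [show N - p + (i + 1) = N - (p - 1) + i by omega, pow_succ, mul_inv, inv_neg]
  ring

/-- the key binomial identity relating the two formulas for `W̊g`. -/
theorem stmt12 (d p N : ℕ) (hdp : d ≤ p) (hpN : p ≤ N) :
    ∑ i ∈ Finset.range (p - d + 1),
        ((p - d).choose i : ℝ) * ((N : ℝ) ^ i)⁻¹ * aSeq (p - i) N =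
      ∑ i ∈ Finset.range (d + 1),
        (d.choose i : ℝ) * ((Nat.factorial (N - p + i) : ℝ) / (Nat.factorial N : ℝ)) *
          ((-(N : ℝ)) ^ i)⁻¹ := by
  induction d generalizing p with
  | zero =>
    simpa using base p N hpN
  | succ d ih =>
    rw [recL d p N hdp, ih p (by omega) hpN, ih (p - 1) (by omega) (by omega),
      recR d p N (by omega) hpN]


end WgPerm

end
end

section
/- For all integers 1 ≤ k ≤ N and every integer p ≥ 1, one has (1/N!)·Σ_{g∈S_N} ∏_{m=1}^{k} (g_{mm} − 1/N)^p = Σ_{l=0}^{k} binom(k,l)·α_p^l·β_p^{k−l}·a_l(N), where α_p = ((N−1)/N)^p − (−1/N)^p and β_p = (1/N)·((N−1)/N)^p + ((N−1)/N)·(−1/N)^p. -/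
open Finset

noncomputable section

namespace WgPerm

lemma card_perm_fixing (N : ℕ) (u : Finset (Fin N)) :
    Fintype.card {g : Equiv.Perm (Fin N) // ∀ a ∈ u, g a = a} = (N - u.card).factorial := by
  classical
  have e : Equiv.Perm {a : Fin N // a ∉ u} ≃ {g : Equiv.Perm (Fin N) // ∀ a ∈ u, g a = a} := by
    refine (Equiv.Perm.subtypeEquivSubtypePerm (fun a => a ∉ u)).trans
      (Equiv.subtypeEquivRight ?_)
    intro g
    constructor
    · intro h a ha; exact h a (not_not.mpr ha)
    · intro h a ha; exact h a (not_not.mp ha)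
  rw [← Fintype.card_congr e, Fintype.card_perm]
  congr 1
  rw [Fintype.card_subtype_compl]
  simp

lemma sum_prod_entry (N : ℕ) (u : Finset (Fin N)) :
    ∑ g : Equiv.Perm (Fin N), ∏ m ∈ u, permEntry g m m
      = ((N - u.card).factorial : ℝ) := by
  classical
  simp_rw [permEntry, Finset.prod_boole]
  rw [← card_perm_fixing N u, Fintype.card_subtype]
  convert Finset.sum_boole (fun g : Equiv.Perm (Fin N) => ∀ i ∈ u, g i = i) univ using 2
  congr!


lemma avg_centered (N : ℕ) (u : Finset (Fin N)) :
    (1 / (N.factorial : ℝ)) *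
        ∑ g : Equiv.Perm (Fin N), ∏ m ∈ u, (permEntry g m m - 1/(N:ℝ))
      = aSeq u.card N := by
  classical
  have hcard : u.card ≤ N := by
    simpa using Finset.card_le_univ u
  have hfac : (N.factorial : ℝ) ≠ 0 := by
    exact_mod_cast Nat.factorial_pos N |>.ne'
  have hprod : ∀ g : Equiv.Perm (Fin N),
      ∏ m ∈ u, (permEntry g m m - 1/(N:ℝ))
        = ∑ t ∈ u.powerset,
            (∏ m ∈ t, permEntry g m m) * (-(1/(N:ℝ)))^(u.card - t.card) := by
    intro g
    simp_rw [sub_eq_add_neg]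
    rw [Finset.prod_add]
    refine Finset.sum_congr rfl fun t ht => ?_
    rw [Finset.prod_const, Finset.card_sdiff_of_subset (Finset.mem_powerset.mp ht)]
  simp_rw [hprod]
  rw [Finset.sum_comm, Finset.mul_sum]
  have hterm : ∀ t ∈ u.powerset,
      (1 / (N.factorial : ℝ)) *
          ∑ g : Equiv.Perm (Fin N),
            (∏ m ∈ t, permEntry g m m) * (-(1/(N:ℝ)))^(u.card - t.card)
        = ((Nat.descFactorial N t.card : ℝ))⁻¹ * (-(1/(N:ℝ)))^(u.card - t.card) := by
    intro t ht
    have htc : t.card ≤ N := le_trans (Finset.card_le_card (Finset.mem_powerset.mp ht)) hcard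
    rw [← Finset.sum_mul, sum_prod_entry]
    have hdf : ((N - t.card).factorial : ℝ) * (Nat.descFactorial N t.card : ℝ)
        = (N.factorial : ℝ) := by
      exact_mod_cast congrArg (Nat.cast : ℕ → ℝ) (Nat.factorial_mul_descFactorial htc)
    have hdf0 : (Nat.descFactorial N t.card : ℝ) ≠ 0 := by
      have : Nat.descFactorial N t.card ≠ 0 := by
        simp [Nat.descFactorial_eq_zero_iff_lt, not_lt.mpr htc]
      exact_mod_cast this
    have h2 : (1 / (N.factorial : ℝ)) * ((N - t.card).factorial : ℝ)
        = ((Nat.descFactorial N t.card : ℝ))⁻¹ := by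
      field_simp
      linear_combination hdf
    rw [← mul_assoc, h2]
  rw [Finset.sum_congr rfl hterm]
  rw [Finset.sum_powerset_apply_card
    (fun l => ((Nat.descFactorial N l : ℝ))⁻¹ * (-(1/(N:ℝ)))^(u.card - l))]
  unfold aSeq
  refine Finset.sum_congr rfl fun l hl => ?_
  rw [nsmul_eq_mul]
  have : (-(1/(N:ℝ)))^(u.card - l) = ((-(N:ℝ))^(u.card - l))⁻¹ := by
    rw [← inv_pow]
    congr 1
    rw [one_div, ← inv_neg]
  rw [this]
  ring


lemma pow_eq_affine (N p : ℕ) (hN : 1 ≤ N) (e : ℝ) (he : e = 0 ∨ e = 1) :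
    (e - 1/(N:ℝ))^p
      = ((((N:ℝ)-1)/(N:ℝ))^p - (-(1/(N:ℝ)))^p) * (e - 1/(N:ℝ)) +
        (1/(N:ℝ) * (((N:ℝ)-1)/(N:ℝ))^p + ((N:ℝ)-1)/(N:ℝ) * (-(1/(N:ℝ)))^p) := by
  have hN0 : (N:ℝ) ≠ 0 := Nat.cast_ne_zero.mpr (by omega)
  rcases he with rfl | rfl
  · have h0 : (0:ℝ) - 1/(N:ℝ) = -(1/(N:ℝ)) := by ring
    rw [h0]
    set a := (((N:ℝ)-1)/(N:ℝ))^p with ha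
    set b := (-(1/(N:ℝ)))^p with hb
    field_simp
    ring
  · have h1 : (1:ℝ) - 1/(N:ℝ) = ((N:ℝ)-1)/(N:ℝ) := by field_simp
    rw [h1]
    set a := (((N:ℝ)-1)/(N:ℝ))^p with ha
    set b := (-(1/(N:ℝ)))^p with hb
    field_simp
    ring

/-- `p`-th centered diagonal moments in terms of `a_l(N)`. -/
theorem stmt18 (k N p : ℕ) (hk : 1 ≤ k) (hN : k ≤ N) (hp : 1 ≤ p) :
    (1 / (Nat.factorial N : ℝ)) *
        ∑ g : Equiv.Perm (Fin N),
          ∏ m : Fin k,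
            (permEntry g (Fin.castLE hN m) (Fin.castLE hN m) - 1 / (N : ℝ)) ^ p =
      ∑ l ∈ Finset.range (k + 1),
        (k.choose l : ℝ) *
          ((((N : ℝ) - 1) / (N : ℝ)) ^ p - (-(1 / (N : ℝ))) ^ p) ^ l *
          (1 / (N : ℝ) * (((N : ℝ) - 1) / (N : ℝ)) ^ p +
            ((N : ℝ) - 1) / (N : ℝ) * (-(1 / (N : ℝ))) ^ p) ^ (k - l) *
          aSeq l N := by
  classical
  have hN1 : 1 ≤ N := le_trans hk hN
  set A := ((((N:ℝ)-1)/(N:ℝ))^p - (-(1/(N:ℝ)))^p) with hA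
  set B := (1/(N:ℝ) * (((N:ℝ)-1)/(N:ℝ))^p + ((N:ℝ)-1)/(N:ℝ) * (-(1/(N:ℝ)))^p) with hB
  -- step 1: per-permutation expansion
  have hexp : ∀ g : Equiv.Perm (Fin N),
      ∏ m : Fin k, (permEntry g (Fin.castLE hN m) (Fin.castLE hN m) - 1/(N:ℝ)) ^ p
        = ∑ t ∈ (Finset.univ : Finset (Fin k)).powerset,
            A ^ t.card * B ^ (k - t.card) *
              ∏ m ∈ t, (permEntry g (Fin.castLE hN m) (Fin.castLE hN m) - 1/(N:ℝ)) := by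
    intro g
    have haff : ∀ m : Fin k,
        (permEntry g (Fin.castLE hN m) (Fin.castLE hN m) - 1/(N:ℝ)) ^ p
          = A * (permEntry g (Fin.castLE hN m) (Fin.castLE hN m) - 1/(N:ℝ)) + B := by
      intro m
      refine pow_eq_affine N p hN1 _ ?_
      unfold permEntry
      split
      · right; rfl
      · left; rfl
    rw [Finset.prod_congr rfl fun m _ => haff m, Finset.prod_add]
    refine Finset.sum_congr rfl fun t ht => ?_
    rw [Finset.prod_mul_distrib, Finset.prod_const, Finset.prod_const,
      Finset.card_sdiff_of_subset (Finset.mem_powerset.mp ht), Finset.card_univ, Fintype.card_fin]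
    ring
  simp_rw [hexp]
  rw [Finset.sum_comm, Finset.mul_sum]
  have hterm : ∀ t ∈ (Finset.univ : Finset (Fin k)).powerset,
      (1 / (Nat.factorial N : ℝ)) *
          ∑ g : Equiv.Perm (Fin N),
            A ^ t.card * B ^ (k - t.card) *
              ∏ m ∈ t, (permEntry g (Fin.castLE hN m) (Fin.castLE hN m) - 1/(N:ℝ))
        = A ^ t.card * B ^ (k - t.card) * aSeq t.card N := by
    intro t ht
    rw [← Finset.mul_sum, ← mul_assoc, mul_comm (1 / (Nat.factorial N : ℝ)), mul_assoc]
    congr 1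
    have hmap : ∀ g : Equiv.Perm (Fin N),
        ∏ m ∈ t, (permEntry g (Fin.castLE hN m) (Fin.castLE hN m) - 1/(N:ℝ))
          = ∏ m ∈ t.map (Fin.castLEEmb hN), (permEntry g m m - 1/(N:ℝ)) := by
      intro g
      rw [Finset.prod_map]
      rfl
    simp_rw [hmap]
    rw [avg_centered N (t.map (Fin.castLEEmb hN)), Finset.card_map]
  rw [Finset.sum_congr rfl hterm]
  rw [Finset.sum_powerset_apply_card (fun l => A ^ l * B ^ (k - l) * aSeq l N)]
  rw [Finset.card_univ, Fintype.card_fin]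
  refine Finset.sum_congr rfl fun l hl => ?_
  rw [nsmul_eq_mul]
  ring

end WgPerm

end
end
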